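/- arXiv:1712.02911 — 10 statements merged into one kernel-verified Lean document; each statement's English description precedes it below -/
import Mathlib

section
/- Let v be a positive natural number and let k, λ, μ, ν be real numbers with 0 < k < v. Let B₁, B₂, B₃ ∈ Matrix (Fin v) (Fin v) ℝ be matrices all of whose entries are 0 or 1, satisfying Bₕ * Bₕᵀ = Bₕᵀ * Bₕ = (k − λ)•1 + λ•J for each h ∈ {1,2,3} (where J is the all-ones matrix), together with the three linking equations B₃ * B₁ = ν•J + (μ − ν)•B₂ᵀ, B₁ * B₂ = ν•J + (μ − ν)•B₃ᵀ, and B₂ * B₃ = ν•J + (μ − ν)•B₁ᵀ. Then (μ − ν)² = k − λ, v·ν = k·(k − (μ − ν)), and ν·(k + (μ − ν)) = λ·k. -/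
open Matrix

/-- The all-ones `v × v` real matrix. -/
def J (v : ℕ) : Matrix (Fin v) (Fin v) ℝ := Matrix.of fun _ _ => 1

lemma J_apply {v : ℕ} (i j : Fin v) : J v i j = 1 := rfl

lemma Jtrans {v : ℕ} : (J v)ᵀ = J v := rfl

lemma J_mul_J {v : ℕ} : J v * J v = (v : ℝ) • J v := by
  ext i j
  simp [Matrix.mul_apply, J_apply]

lemma rowsum {v : ℕ} {k lam : ℝ} {B : Matrix (Fin v) (Fin v) ℝ}
    (h01 : ∀ a b, B a b = 0 ∨ B a b = 1)
    (hB : B * Bᵀ = (k - lam) • (1 : Matrix (Fin v) (Fin v) ℝ) + lam • J v) :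
    ∀ i, ∑ j, B i j = k := by
  intro i
  have h := congrFun (congrFun hB i) i
  simp [Matrix.mul_apply, Matrix.one_apply, J_apply] at h
  have h2 : ∑ j, B i j = ∑ j, B i j * B i j := by
    refine Finset.sum_congr rfl fun j _ => ?_
    rcases h01 i j with h' | h' <;> simp [h']
  rw [h2, h]

lemma colsum {v : ℕ} {k lam : ℝ} {B : Matrix (Fin v) (Fin v) ℝ}
    (h01 : ∀ a b, B a b = 0 ∨ B a b = 1)
    (hBt : Bᵀ * B = (k - lam) • (1 : Matrix (Fin v) (Fin v) ℝ) + lam • J v) :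
    ∀ j, ∑ i, B i j = k := by
  intro j
  have h01t : ∀ a b, Bᵀ a b = 0 ∨ Bᵀ a b = 1 := fun a b => h01 b a
  have hBt' : Bᵀ * Bᵀᵀ = (k - lam) • (1 : Matrix (Fin v) (Fin v) ℝ) + lam • J v := by
    rwa [Matrix.transpose_transpose]
  simpa [Matrix.transpose_apply] using rowsum h01t hBt' j

lemma mulJ {v : ℕ} {k : ℝ} {B : Matrix (Fin v) (Fin v) ℝ}
    (hrow : ∀ i, ∑ j, B i j = k) : B * J v = k • J v := by
  ext i j
  simp [Matrix.mul_apply, J_apply, hrow i]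

lemma Jmul {v : ℕ} {k : ℝ} {B : Matrix (Fin v) (Fin v) ℝ}
    (hcol : ∀ j, ∑ i, B i j = k) : J v * B = k • J v := by
  ext i j
  simp [Matrix.mul_apply, J_apply, hcol j]

lemma sub_ne_zero_of_design {v : ℕ} {k lam : ℝ} (hv2 : 2 ≤ v) (hk0 : 0 < k)
    (hkv : k < (v : ℝ)) {B : Matrix (Fin v) (Fin v) ℝ}
    (h01 : ∀ a b, B a b = 0 ∨ B a b = 1)
    (hB : B * Bᵀ = (k - lam) • (1 : Matrix (Fin v) (Fin v) ℝ) + lam • J v)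
    (hBt : Bᵀ * B = (k - lam) • (1 : Matrix (Fin v) (Fin v) ℝ) + lam • J v) :
    k - lam ≠ 0 := by
  intro hkl
  have hrow := rowsum h01 hB
  have hcol := colsum h01 hBt
  have hoff : ∀ i j, ∑ l, B i l * B j l = k := by
    intro i j
    have h := congrFun (congrFun hB i) j
    simp [Matrix.mul_apply, Matrix.one_apply, J_apply, hkl] at h
    have hlk : lam = k := by linarith
    rw [h, hlk]
  have heq : ∀ i j l, B i l = B i l * B j l := by
    intro i j l
    have hsum : ∑ m, (B i m - B i m * B j m) = 0 := by
      rw [Finset.sum_sub_distrib, hrow i, hoff i j]; ring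
    have hnn : ∀ m ∈ Finset.univ, (0:ℝ) ≤ B i m - B i m * B j m := by
      intro m _
      rcases h01 i m with h1 | h1 <;> rcases h01 j m with h2 | h2 <;> simp [h1, h2]
    have := (Finset.sum_eq_zero_iff_of_nonneg hnn).mp hsum l (Finset.mem_univ l)
    linarith
  have hall : ∀ i j l, B i l = B j l := by
    intro i j l
    have h1 := heq i j l
    have h2 := heq j i l
    rw [h1, mul_comm, ← h2]
  have i0 : Fin v := ⟨0, by omega⟩
  have hc : ∑ i, B i i0 = k := hcol i0
  have hconst : ∑ i, B i i0 = (v : ℝ) * B i0 i0 := by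
    rw [Finset.sum_congr rfl fun i _ => hall i i0 i0]
    simp [Finset.card_univ, mul_comm]
  rcases h01 i0 i0 with h' | h' <;> rw [h'] at hconst <;> rw [hconst] at hc <;> nlinarith

theorem stmt_0 (v : ℕ) (hv : 0 < v) (k lam mu nu : ℝ)
    (hk0 : 0 < k) (hkv : k < (v : ℝ))
    (B₁ B₂ B₃ : Matrix (Fin v) (Fin v) ℝ)
    (h01 : ∀ B ∈ [B₁, B₂, B₃], ∀ a b, B a b = 0 ∨ B a b = 1)
    (hdes : ∀ B ∈ [B₁, B₂, B₃],
      B * Bᵀ = (k - lam) • (1 : Matrix (Fin v) (Fin v) ℝ) + lam • J v ∧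
      Bᵀ * B = (k - lam) • (1 : Matrix (Fin v) (Fin v) ℝ) + lam • J v)
    (h31 : B₃ * B₁ = nu • J v + (mu - nu) • B₂ᵀ)
    (h12 : B₁ * B₂ = nu • J v + (mu - nu) • B₃ᵀ)
    (h23 : B₂ * B₃ = nu • J v + (mu - nu) • B₁ᵀ) :
    (mu - nu) ^ 2 = k - lam ∧
    (v : ℝ) * nu = k * (k - (mu - nu)) ∧
    nu * (k + (mu - nu)) = lam * k := by
  set t := mu - nu with ht
  obtain ⟨hB1, hB1t⟩ := hdes B₁ (by simp)
  obtain ⟨hB2, hB2t⟩ := hdes B₂ (by simp)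
  obtain ⟨hB3, hB3t⟩ := hdes B₃ (by simp)
  have h01₁ := h01 B₁ (by simp)
  have h01₂ := h01 B₂ (by simp)
  have h01₃ := h01 B₃ (by simp)
  have hr1 := rowsum h01₁ hB1
  have hr2 := rowsum h01₂ hB2
  have hc3 := colsum h01₃ hB3t
  have hv2 : 2 ≤ v := by
    by_contra h
    have hv1 : v = 1 := by omega
    subst hv1
    have h0 := hr1 0
    rw [Fin.sum_univ_one] at h0
    rcases h01₁ 0 0 with h' | h' <;> rw [h'] at h0 <;> push_cast at hkv <;> linarith
  have hkl : k - lam ≠ 0 := sub_ne_zero_of_design hv2 hk0 hkv h01₁ hB1 hB1t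
  -- auxiliary products with J
  have hJ1 : B₁ * J v = k • J v := mulJ hr1
  have hJ2 : B₂ * J v = k • J v := mulJ hr2
  have hJ1' : J v * B₁ᵀ = k • J v := Jmul (fun j => by simpa [Matrix.transpose_apply] using hr1 j)
  have hJ3 : J v * B₃ = k • J v := Jmul hc3
  have hJ3' : B₃ᵀ * J v = k • J v := mulJ (fun i => by simpa [Matrix.transpose_apply] using hc3 i)
  -- first identity : (B₁B₂)(B₁B₂)ᵀ two ways
  have e1 : B₁ * B₂ * (B₁ * B₂)ᵀ
      = ((k-lam)*(k-lam)) • (1 : Matrix (Fin v) (Fin v) ℝ)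
        + ((k-lam)*lam + lam*(k*k)) • J v := by
    rw [Matrix.transpose_mul, Matrix.mul_assoc, ← Matrix.mul_assoc B₂, hB2]
    rw [Matrix.add_mul, Matrix.smul_mul, Matrix.smul_mul, Matrix.one_mul]
    rw [Matrix.mul_add, Matrix.mul_smul, Matrix.mul_smul, hB1, hJ1']
    rw [Matrix.mul_smul, hJ1]
    module
  have e2 : (nu • J v + t • B₃ᵀ) * (nu • J v + t • B₃ᵀ)ᵀ
      = ((t*t)*(k-lam)) • (1 : Matrix (Fin v) (Fin v) ℝ)
        + ((nu*nu)*(v:ℝ) + 2*(nu*(t*k)) + (t*t)*lam) • J v := by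
    rw [Matrix.transpose_add, Matrix.transpose_smul, Matrix.transpose_smul,
      Jtrans, Matrix.transpose_transpose]
    rw [Matrix.add_mul, Matrix.mul_add, Matrix.mul_add]
    rw [Matrix.smul_mul, Matrix.mul_smul, J_mul_J, Matrix.smul_mul, Matrix.mul_smul, hJ3]
    rw [Matrix.smul_mul, Matrix.mul_smul, hJ3', Matrix.smul_mul, Matrix.mul_smul, hB3t]
    module
  have key : ((k-lam)*(k-lam)) • (1 : Matrix (Fin v) (Fin v) ℝ)
        + ((k-lam)*lam + lam*(k*k)) • J v
      = ((t*t)*(k-lam)) • (1 : Matrix (Fin v) (Fin v) ℝ)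
        + ((nu*nu)*(v:ℝ) + 2*(nu*(t*k)) + (t*t)*lam) • J v := by
    rw [← e1, ← e2, h12]
  -- second identity : B₁B₂J two ways
  have e3 : ((k*k) : ℝ) • J v = ((nu*(v:ℝ)) + t*k) • J v := by
    have l1 : B₁ * B₂ * J v = (k*k) • J v := by
      rw [Matrix.mul_assoc, hJ2, Matrix.mul_smul, hJ1]
      module
    have l2 : (nu • J v + t • B₃ᵀ) * J v = ((nu*(v:ℝ)) + t*k) • J v := by
      rw [Matrix.add_mul, Matrix.smul_mul, Matrix.smul_mul, J_mul_J, hJ3']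
      module
    rw [← l1, ← l2, h12]
  -- extract scalar equations
  have i0 : Fin v := ⟨0, by omega⟩
  have i1 : Fin v := ⟨1, by omega⟩
  have hne01 : (⟨0, by omega⟩ : Fin v) ≠ (⟨1, by omega⟩ : Fin v) := by
    simp [Fin.ext_iff]
  have koff := congrFun (congrFun key ⟨0, by omega⟩) ⟨1, by omega⟩
  have kdiag := congrFun (congrFun key ⟨0, by omega⟩) ⟨0, by omega⟩
  have escal := congrFun (congrFun e3 ⟨0, by omega⟩) ⟨0, by omega⟩
  simp [Matrix.add_apply, Matrix.smul_apply, Matrix.one_apply, J_apply, hne01] at koff kdiag escal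
  -- koff : (k-lam)*lam + lam*(k*k) = (nu*nu)*v + 2*(nu*(t*k)) + (t*t)*lam
  -- kdiag : adds the identity part
  -- escal : k*k = nu*v + t*k
  have hteq : t * t = k - lam := by
    have hdm : (k-lam)*(k-lam) = (t*t)*(k-lam) := by linarith
    exact (mul_right_cancel₀ hkl hdm.symm)
  refine ⟨by rw [pow_two]; exact hteq, by linear_combination (-1 : ℝ) * escal, ?_⟩
  have hK : (nu*(k+t) - lam*k)*k = 0 := by
    linear_combination (-1 : ℝ) * koff - lam * hteq + nu * escal
  have := mul_eq_zero.mp hK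
  rcases this with h | h
  · linarith
  · exact absurd h (ne_of_gt hk0)
end

section
/- Let {B i j} be an LSSD(v,k,λ;w) with linking parameters μ, ν, where v, w ≥ 2 are natural numbers and k, λ, μ, ν are real parameters. Then the multipartite complement family B' i j := J − B i j is an LSSD(v, v−k, v−2k+λ; w) with linking parameters μ' = v−2k+ν and ν' = v−2k+μ; in particular, if the original system is μ-heavy (μ > ν) then its complement satisfies ν' > μ'. -/
open Matrix

lemma Jt (v : ℕ) : (_root_.J v)ᵀ = _root_.J v := by ext a b; simp [_root_.J]

lemma JmulJ (v : ℕ) : _root_.J v * _root_.J v = (v : ℝ) • _root_.J v := by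
  ext a b; simp [_root_.J, Matrix.mul_apply, Finset.sum_const]

lemma row_sum_eq (v : ℕ) (k lam : ℝ) (M : Matrix (Fin v) (Fin v) ℝ)
    (h01 : ∀ a b, M a b = 0 ∨ M a b = 1)
    (h : M * Mᵀ = (k - lam) • (1 : Matrix (Fin v) (Fin v) ℝ) + lam • _root_.J v) :
    ∀ a : Fin v, ∑ c, M a c = k := by
  intro a
  have := congrFun (congrFun h a) a
  simp only [Matrix.mul_apply, Matrix.transpose_apply, Matrix.add_apply,
    Matrix.smul_apply, Matrix.one_apply_eq, _root_.J, Matrix.of_apply, smul_eq_mul,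
    mul_one] at this
  have h2 : ∑ c, M a c * M a c = ∑ c, M a c := by
    refine Finset.sum_congr rfl fun c _ => ?_
    rcases h01 a c with h' | h' <;> simp [h']
  linarith [h2 ▸ this]

lemma mul_J_eq (v : ℕ) (k lam : ℝ) (M : Matrix (Fin v) (Fin v) ℝ)
    (h01 : ∀ a b, M a b = 0 ∨ M a b = 1)
    (h : M * Mᵀ = (k - lam) • (1 : Matrix (Fin v) (Fin v) ℝ) + lam • _root_.J v) :
    M * _root_.J v = k • _root_.J v := by
  ext a b
  simp [Matrix.mul_apply, _root_.J, row_sum_eq v k lam M h01 h a]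

lemma J_mul_eq (v : ℕ) (k lam : ℝ) (M : Matrix (Fin v) (Fin v) ℝ)
    (h01 : ∀ a b, M a b = 0 ∨ M a b = 1)
    (h : Mᵀ * M = (k - lam) • (1 : Matrix (Fin v) (Fin v) ℝ) + lam • _root_.J v) :
    _root_.J v * M = k • _root_.J v := by
  have h01' : ∀ a b, Mᵀ a b = 0 ∨ Mᵀ a b = 1 := fun a b => h01 b a
  have h' : Mᵀ * Mᵀᵀ = (k - lam) • (1 : Matrix (Fin v) (Fin v) ℝ) + lam • _root_.J v := by
    rwa [Matrix.transpose_transpose]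
  have key := mul_J_eq v k lam Mᵀ h01' h'
  calc _root_.J v * M = (Mᵀ * (_root_.J v)ᵀ)ᵀ := by simp
    _ = (Mᵀ * _root_.J v)ᵀ := by rw [Jt]
    _ = (k • _root_.J v)ᵀ := by rw [key]
    _ = k • _root_.J v := by rw [Matrix.transpose_smul, Jt]

/-- A linked system of symmetric designs `LSSD(v,k,λ;w)` with linking parameters `μ, ν`:
a family of `v × v` 0-1 matrices `B i j`, one for each ordered pair of distinct fibers,
with `B j i = (B i j)ᵀ`, each `B i j` the incidence matrix of a symmetric
`(v,k,λ)`-design, and the linking equations between any three distinct fibers. -/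
def IsLSSD (v w : ℕ) (k lam mu nu : ℝ)
    (B : Fin w → Fin w → Matrix (Fin v) (Fin v) ℝ) : Prop :=
  (∀ i j : Fin w, i ≠ j → ∀ a b : Fin v, B i j a b = 0 ∨ B i j a b = 1) ∧
  (∀ i j : Fin w, i ≠ j → B j i = (B i j)ᵀ) ∧
  (∀ i j : Fin w, i ≠ j →
    B i j * (B i j)ᵀ = (k - lam) • (1 : Matrix (Fin v) (Fin v) ℝ) + lam • J v ∧
    (B i j)ᵀ * B i j = (k - lam) • (1 : Matrix (Fin v) (Fin v) ℝ) + lam • J v) ∧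
  (∀ h i j : Fin w, h ≠ i → h ≠ j → i ≠ j →
    B i h * B h j = nu • J v + (mu - nu) • B i j)

theorem stmt_1 (v w : ℕ) (hv : 2 ≤ v) (hw : 2 ≤ w) (k lam mu nu : ℝ)
    (B : Fin w → Fin w → Matrix (Fin v) (Fin v) ℝ)
    (hB : IsLSSD v w k lam mu nu B) :
    IsLSSD v w ((v : ℝ) - k) ((v : ℝ) - 2 * k + lam)
        ((v : ℝ) - 2 * k + nu) ((v : ℝ) - 2 * k + mu)
        (fun i j => J v - B i j) ∧
    (mu > nu → (v : ℝ) - 2 * k + mu > (v : ℝ) - 2 * k + nu) := by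
  obtain ⟨h01, ht, hd, hl⟩ := hB
  have hMJ : ∀ i j : Fin w, i ≠ j → B i j * _root_.J v = k • _root_.J v := fun i j hij =>
    mul_J_eq v k lam (B i j) (h01 i j hij) (hd i j hij).1
  have hJM : ∀ i j : Fin w, i ≠ j → _root_.J v * B i j = k • _root_.J v := fun i j hij =>
    J_mul_eq v k lam (B i j) (h01 i j hij) (hd i j hij).2
  have hJMt : ∀ i j : Fin w, i ≠ j → _root_.J v * (B i j)ᵀ = k • _root_.J v := by
    intro i j hij
    refine J_mul_eq v k lam (B i j)ᵀ (fun a b => h01 i j hij b a) ?_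
    rw [Matrix.transpose_transpose]; exact (hd i j hij).1
  have hMtJ : ∀ i j : Fin w, i ≠ j → (B i j)ᵀ * _root_.J v = k • _root_.J v := by
    intro i j hij
    refine mul_J_eq v k lam (B i j)ᵀ (fun a b => h01 i j hij b a) ?_
    rw [Matrix.transpose_transpose]; exact (hd i j hij).2
  refine ⟨⟨?_, ?_, ?_, ?_⟩, fun h => by linarith⟩
  · intro i j hij a b
    rcases h01 i j hij a b with h' | h' <;>
      simp [_root_.J, Matrix.sub_apply, h']
  · intro i j hij
    simp only
    rw [ht i j hij, Matrix.transpose_sub, Jt]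
  · intro i j hij
    constructor
    · have e : (_root_.J v - B i j) * (_root_.J v - B i j)ᵀ =
          _root_.J v * _root_.J v - _root_.J v * (B i j)ᵀ - B i j * _root_.J v
            + B i j * (B i j)ᵀ := by
        rw [Matrix.transpose_sub, Jt]; noncomm_ring
      rw [e, JmulJ, hJMt i j hij, hMJ i j hij, (hd i j hij).1]
      module
    · have e : (_root_.J v - B i j)ᵀ * (_root_.J v - B i j) =
          _root_.J v * _root_.J v - _root_.J v * B i j - (B i j)ᵀ * _root_.J v
            + (B i j)ᵀ * B i j := by
        rw [Matrix.transpose_sub, Jt]; noncomm_ring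
      rw [e, JmulJ, hJM i j hij, hMtJ i j hij, (hd i j hij).2]
      module
  · intro h i j hhi hhj hij
    simp only
    have e : (_root_.J v - B i h) * (_root_.J v - B h j) =
        _root_.J v * _root_.J v - _root_.J v * B h j - B i h * _root_.J v
          + B i h * B h j := by noncomm_ring
    rw [e, JmulJ, hJM h j hhj, hMJ i h (Ne.symm hhi), hl h i j hhi hhj hij]
    module
end

section
/- Let v, k, λ, s be positive integers with s² = k − λ, k·(k−1) = λ·(v−1), and 1 < k < v−1, and suppose that v divides k·(k+s) or v divides k·(k−s). Then: (i) v does not divide both k·(k+s) and k·(k−s); (ii) gcd(k, v) > 1; and (iii) gcd(s, v) > 1. -/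
theorem stmt_2 (v k lam s : ℤ) (hv : 0 < v) (hk : 0 < k) (hlam : 0 < lam) (hs : 0 < s)
    (hs2 : s ^ 2 = k - lam) (hdes : k * (k - 1) = lam * (v - 1))
    (hk1 : 1 < k) (hkv : k < v - 1)
    (hdvd : v ∣ k * (k + s) ∨ v ∣ k * (k - s)) :
    ¬(v ∣ k * (k + s) ∧ v ∣ k * (k - s)) ∧
    1 < Int.gcd k v ∧
    1 < Int.gcd s v := by
  -- s ≥ 2
  have hs2' : 2 ≤ s := by
    by_contra h
    push_neg at h
    have hs1 : s = 1 := by omega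
    subst hs1
    have hl : lam = k - 1 := by linarith [hs2]
    nlinarith [hdes]
  have hks : s < k := by nlinarith
  have hkey : k ^ 2 = lam * v + s ^ 2 := by nlinarith [hdes]
  have hfac : (k + s) * (k - s) = lam * v := by nlinarith
  -- v does not divide k + s
  have hC : ¬ v ∣ (k + s) := by
    rintro ⟨t, ht⟩
    have ht1 : t * (k - s) = lam := by
      have h2 : v * (t * (k - s)) = v * lam := by
        rw [ht] at hfac; linear_combination hfac
      exact mul_left_cancel₀ hv.ne' h2
    have htpos : 0 < t := by
      by_contra h
      push_neg at h
      have : t * (k - s) ≤ 0 := mul_nonpos_of_nonpos_of_nonneg h (by linarith)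
      linarith
    nlinarith [mul_nonneg (by linarith : (0:ℤ) ≤ t - 1) (by linarith : (0:ℤ) ≤ k - s)]
  -- v does not divide k - s
  have hD : ¬ v ∣ (k - s) := by
    intro h
    have := Int.le_of_dvd (by linarith) h
    linarith
  -- identities
  have e1 : s * (k + s) = k * (k + s) - lam * v := by linear_combination -hkey
  have e2 : s * (k - s) = lam * v - k * (k - s) := by linear_combination hkey
  have hlamv : v ∣ lam * v := dvd_mul_left v lam
  have hS1 : v ∣ k * (k + s) → v ∣ s * (k + s) := fun h => e1 ▸ dvd_sub h hlamv
  have hS2 : v ∣ k * (k - s) → v ∣ s * (k - s) := fun h => e2 ▸ dvd_sub hlamv h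
  have hsv3 : s ^ 2 ≤ v - 3 := by nlinarith
  refine ⟨?_, ?_, ?_⟩
  · rintro ⟨h1, h2⟩
    have d1 := hS1 h1
    have d2 := hS2 h2
    have hd : v ∣ 2 * s ^ 2 := by
      have : s * (k + s) - s * (k - s) = 2 * s ^ 2 := by ring
      exact this ▸ dvd_sub d1 d2
    obtain ⟨c, hc⟩ := hd
    have hcpos : 0 < c := by
      by_contra h
      push_neg at h
      have : v * c ≤ 0 := mul_nonpos_of_nonneg_of_nonpos hv.le h
      nlinarith
    have hc1 : c = 1 := by
      by_contra h
      have hc2 : 2 ≤ c := by omega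
      nlinarith [mul_nonneg (by linarith : (0:ℤ) ≤ c - 2) hv.le]
    subst hc1
    -- now v = 2 s², derive contradiction
    have hveq : v = 2 * s ^ 2 := by linarith [hc]
    nlinarith [sq_nonneg (k - s ^ 2)]
  · by_contra h
    push_neg at h
    have hg0 : Int.gcd k v ≠ 0 := by
      simp [Int.gcd_eq_zero_iff]
      omega
    have hg1 : Int.gcd k v = 1 := by omega
    have hco : IsCoprime v k := (Int.isCoprime_iff_gcd_eq_one.mpr hg1).symm
    rcases hdvd with h1 | h1
    · exact hC (hco.dvd_of_dvd_mul_left h1)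
    · exact hD (hco.dvd_of_dvd_mul_left h1)
  · by_contra h
    push_neg at h
    have hg0 : Int.gcd s v ≠ 0 := by
      simp [Int.gcd_eq_zero_iff]
      omega
    have hg1 : Int.gcd s v = 1 := by omega
    have hco : IsCoprime v s := (Int.isCoprime_iff_gcd_eq_one.mpr hg1).symm
    rcases hdvd with h1 | h1
    · exact hC (hco.dvd_of_dvd_mul_left (hS1 h1))
    · exact hD (hco.dvd_of_dvd_mul_left (hS2 h1))
end

section
/- Let v, k, λ, s be positive integers with s² = k − λ, k·(k−1) = λ·(v−1), and 1 < k < v−1, and suppose that v divides k·(k+s) or v divides k·(k−s). Then v is not prime. -/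
theorem stmt_3 (v k lam s : ℤ) (hv : 0 < v) (hk : 0 < k) (hlam : 0 < lam) (hs : 0 < s)
    (hs2 : s ^ 2 = k - lam) (hdes : k * (k - 1) = lam * (v - 1))
    (hk1 : 1 < k) (hkv : k < v - 1)
    (hdvd : v ∣ k * (k + s) ∨ v ∣ k * (k - s)) :
    ¬ Prime v := by
  intro hp
  -- s < k
  have hks : s < k := by nlinarith
  -- s ≥ 2
  have hs2' : 2 ≤ s := by
    by_contra h
    have h1 : s = 1 := by omega
    subst h1
    nlinarith
  -- key identity
  have h1 : lam * (v - 1 - k) = k * (s ^ 2 - 1) := by nlinarith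
  have key : lam * (v - 1 - k - s) = k * (s ^ 2 - s - 1) + s ^ 3 := by
    linear_combination h1 - s * hs2
  have hpos : 0 < lam * (v - 1 - k - s) := by
    nlinarith [mul_pos hk (show (0:ℤ) < s ^ 2 - s - 1 by nlinarith), pow_pos hs 3]
  have h2 : k + s < v := by
    by_contra h
    push_neg at h
    have hle : v - 1 - k - s ≤ -1 := by omega
    have := mul_le_mul_of_nonneg_left hle hlam.le
    linarith
  have hvk : ¬ v ∣ k := fun h => absurd (Int.le_of_dvd hk h) (by omega)
  rcases hdvd with h | h
  · have := (hp.dvd_mul.mp h).resolve_left hvk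
    have := Int.le_of_dvd (by omega) this
    omega
  · have := (hp.dvd_mul.mp h).resolve_left hvk
    have := Int.le_of_dvd (by omega) this
    omega
end

section
/- Let v ≥ 2 be a natural number and let a : Fin v → EuclideanSpace ℝ (Fin (v−1)) be a regular simplex. Then for all x, y ∈ EuclideanSpace ℝ (Fin (v−1)), ∑ i, ⟪a i, x⟫ * ⟪a i, y⟫ = (v/(v−1)) * ⟪x, y⟫. -/
open RealInnerProductSpace

private lemma stmt_4_aux {E : Type*} [NormedAddCommGroup E] [InnerProductSpace ℝ E]
    [FiniteDimensional ℝ E] (v : ℕ) (hv : 2 ≤ v) (hdim : Module.finrank ℝ E = v - 1)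
    (a : Fin v → E) (hnorm : ∀ i, ‖a i‖ = 1)
    (hangle : ∀ i j, i ≠ j → ⟪a i, a j⟫ = -1 / ((v : ℝ) - 1)) (x y : E) :
    ∑ i, ⟪a i, x⟫ * ⟪a i, y⟫ = ((v : ℝ) / ((v : ℝ) - 1)) * ⟪x, y⟫ := by
  classical
  have hv1 : (1 : ℝ) ≤ (v : ℝ) - 1 := by
    have : (2 : ℝ) ≤ (v : ℝ) := by exact_mod_cast hv
    linarith
  have hvpos : (0 : ℝ) < (v : ℝ) - 1 := by linarith
  have hvpos' : (0 : ℝ) < (v : ℝ) := by linarith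
  set r : ℝ := Real.sqrt (1 / ((v : ℝ) - 1)) with hr
  have hr2 : r ^ 2 = 1 / ((v : ℝ) - 1) := Real.sq_sqrt (by positivity)
  set s : ℝ := Real.sqrt (((v : ℝ) - 1) / v) with hs
  have hs2 : s ^ 2 = ((v : ℝ) - 1) / v := Real.sq_sqrt (by positivity)
  set e : Fin v → WithLp 2 (E × ℝ) :=
    fun i => s • (WithLp.equiv 2 (E × ℝ)).symm (a i, r) with he
  have base : ∀ (u w : E) (c d : ℝ),
      ⟪(WithLp.equiv 2 (E × ℝ)).symm (u, c), (WithLp.equiv 2 (E × ℝ)).symm (w, d)⟫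
        = ⟪u, w⟫ + c * d := by
    intro u w c d
    rw [WithLp.prod_inner_apply]
    simp [RCLike.inner_apply, mul_comm]
  have key : ∀ i j, ⟪e i, e j⟫ = s ^ 2 * (⟪a i, a j⟫ + r ^ 2) := by
    intro i j
    rw [he]
    simp only [real_inner_smul_left, real_inner_smul_right, base]
    ring
  have horth : Orthonormal ℝ e := by
    rw [orthonormal_iff_ite]
    intro i j
    rw [key]
    by_cases h : i = j
    · subst h
      have h1 : ⟪a i, a i⟫ = 1 := by
        rw [real_inner_self_eq_norm_sq, hnorm i]; norm_num
      rw [h1, hs2, hr2]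
      simp only [if_pos rfl]
      field_simp
      simp
    · rw [hangle i j h, hs2, hr2]
      simp only [if_neg h]
      field_simp
      simp
  have hfinrank : Module.finrank ℝ (WithLp 2 (E × ℝ)) = v := by
    have h1 : Module.finrank ℝ (WithLp 2 (E × ℝ)) = Module.finrank ℝ (E × ℝ) :=
      (WithLp.linearEquiv 2 ℝ (E × ℝ)).finrank_eq
    rw [h1, Module.finrank_prod, hdim, Module.finrank_self]
    omega
  have hne : Nonempty (Fin v) := ⟨⟨0, by omega⟩⟩
  have hcard : Fintype.card (Fin v) = Module.finrank ℝ (WithLp 2 (E × ℝ)) := by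
    simp [hfinrank]
  let b : Module.Basis (Fin v) ℝ (WithLp 2 (E × ℝ)) :=
    basisOfLinearIndependentOfCardEqFinrank horth.linearIndependent hcard
  have hb : ⇑b = e := coe_basisOfLinearIndependentOfCardEqFinrank _ _
  let ob : OrthonormalBasis (Fin v) ℝ (WithLp 2 (E × ℝ)) :=
    b.toOrthonormalBasis (by rwa [hb])
  have hob : ⇑ob = e := by rw [Module.Basis.coe_toOrthonormalBasis, hb]
  set x' : WithLp 2 (E × ℝ) := (WithLp.equiv 2 (E × ℝ)).symm (x, 0) with hx'
  set y' : WithLp 2 (E × ℝ) := (WithLp.equiv 2 (E × ℝ)).symm (y, 0) with hy'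
  have parseval := ob.sum_inner_mul_inner x' y'
  rw [hob] at parseval
  have hxi : ∀ i, ⟪x', e i⟫ = s * ⟪a i, x⟫ := by
    intro i
    rw [he, hx']
    simp only [real_inner_smul_right, base]
    rw [real_inner_comm]
    ring
  have hyi : ∀ i, ⟪e i, y'⟫ = s * ⟪a i, y⟫ := by
    intro i
    rw [he, hy']
    simp only [real_inner_smul_left, base]
    ring
  have hxy : ⟪x', y'⟫ = ⟪x, y⟫ := by
    rw [hx', hy', base]; ring
  simp_rw [hxi, hyi, hxy] at parseval
  have hkey : s ^ 2 * ∑ i, ⟪a i, x⟫ * ⟪a i, y⟫ = ⟪x, y⟫ := by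
    rw [← parseval, Finset.mul_sum]
    congr 1; ext i; ring
  rw [hs2] at hkey
  have hne' : ((v : ℝ) - 1) ≠ 0 := ne_of_gt hvpos
  have hne'' : (v : ℝ) ≠ 0 := ne_of_gt hvpos'
  field_simp at hkey
  rw [div_mul_eq_mul_div, eq_div_iff hne']
  linarith [hkey]

/-- A regular simplex in `ℝ^(v-1)`: a family of `v` unit vectors with pairwise
inner products `-1/(v-1)`. -/
def IsRegularSimplex (v : ℕ) (a : Fin v → EuclideanSpace ℝ (Fin (v - 1))) : Prop :=
  (∀ i, ‖a i‖ = 1) ∧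
  ∀ i j, i ≠ j → ⟪a i, a j⟫ = -1 / ((v : ℝ) - 1)

theorem stmt_4 (v : ℕ) (hv : 2 ≤ v) (a : Fin v → EuclideanSpace ℝ (Fin (v - 1)))
    (ha : IsRegularSimplex v a) (x y : EuclideanSpace ℝ (Fin (v - 1))) :
    ∑ i, ⟪a i, x⟫ * ⟪a i, y⟫ = ((v : ℝ) / ((v : ℝ) - 1)) * ⟪x, y⟫ :=
  stmt_4_aux v hv (by simp [finrank_euclideanSpace]) a ha.1 ha.2 x y
end

section
/- Let v ≥ 2 and let a, b : Fin v → EuclideanSpace ℝ (Fin (v−1)) be regular simplices that are linked with inner products γ, ζ (γ ≠ ζ). For each j define the block B j := {i | ⟪a i, b j⟫ = γ}. Then for every j, (|B j| : ℝ) = v·ζ/(ζ−γ), and for all s ≠ t, (|B s ∩ B t| : ℝ) = (v·ζ² − v/(v−1)²)/(ζ−γ)². In particular all blocks have the same size and any two distinct blocks meet in the same number of points, so (Fin v, {B j}) is a symmetric 2-design. -/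
open RealInnerProductSpace

/-- Two regular simplices are linked with inner products `γ, ζ` if every inner product
between a vector of one and a vector of the other equals `γ` or `ζ`. -/
def AreLinked (v : ℕ) (a b : Fin v → EuclideanSpace ℝ (Fin (v - 1))) (γ ζ : ℝ) : Prop :=
  ∀ i j, ⟪a i, b j⟫ = γ ∨ ⟪a i, b j⟫ = ζ

lemma simplex_sum_zero (v : ℕ) (hv : 2 ≤ v) (a : Fin v → EuclideanSpace ℝ (Fin (v-1)))
    (ha : IsRegularSimplex v a) : ∑ i, a i = 0 := by
  obtain ⟨ha1, ha2⟩ := ha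
  have hv0 : (v:ℝ) - 1 ≠ 0 := by
    have : (2:ℝ) ≤ v := by exact_mod_cast hv
    linarith
  have hinner : ∀ i, ∑ j, ⟪a i, a j⟫ = 0 := by
    intro i
    rw [← Finset.add_sum_erase _ _ (Finset.mem_univ i)]
    have h1 : ⟪a i, a i⟫ = 1 := by
      rw [real_inner_self_eq_norm_sq, ha1 i]; norm_num
    have h2 : ∑ j ∈ Finset.univ.erase i, ⟪a i, a j⟫
        = ∑ j ∈ Finset.univ.erase i, (-1 / ((v:ℝ) - 1)) := by
      refine Finset.sum_congr rfl fun j hj => ?_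
      exact ha2 i j (Ne.symm (Finset.ne_of_mem_erase hj))
    rw [h1, h2, Finset.sum_const, Finset.card_erase_of_mem (Finset.mem_univ i),
      Finset.card_univ, Fintype.card_fin]
    have : ((v - 1 : ℕ) : ℝ) = (v:ℝ) - 1 := by
      have : 1 ≤ v := by omega
      push_cast [this]; ring
    rw [nsmul_eq_mul, this]
    field_simp
    ring
  have h : ⟪∑ i, a i, ∑ j, a j⟫ = 0 := by
    rw [sum_inner]
    refine Finset.sum_eq_zero fun i _ => ?_
    rw [inner_sum]
    exact hinner i
  exact inner_self_eq_zero.mp h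


lemma simplex_frame_vec (v : ℕ) (hv : 2 ≤ v) (a : Fin v → EuclideanSpace ℝ (Fin (v-1)))
    (ha : IsRegularSimplex v a) (j : Fin v) :
    ∑ k, ⟪a k, a j⟫ • a k = ((v:ℝ)/((v:ℝ)-1)) • a j := by
  obtain ⟨ha1, ha2⟩ := ha
  have hv0 : (v:ℝ) - 1 ≠ 0 := by
    have : (2:ℝ) ≤ v := by exact_mod_cast hv
    linarith
  have hsz := simplex_sum_zero v hv a ⟨ha1, ha2⟩
  rw [← Finset.add_sum_erase _ _ (Finset.mem_univ j)]
  have h1 : ⟪a j, a j⟫ = 1 := by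
    rw [real_inner_self_eq_norm_sq, ha1 j]; norm_num
  have h2 : ∑ k ∈ Finset.univ.erase j, ⟪a k, a j⟫ • a k
      = (-1 / ((v:ℝ) - 1)) • ∑ k ∈ Finset.univ.erase j, a k := by
    rw [Finset.smul_sum]
    refine Finset.sum_congr rfl fun k hk => ?_
    rw [ha2 k j (Finset.ne_of_mem_erase hk)]
  have h3 : ∑ k ∈ Finset.univ.erase j, a k = -(a j) := by
    have := Finset.add_sum_erase Finset.univ a (Finset.mem_univ j)
    rw [hsz] at this
    exact eq_neg_of_add_eq_zero_right this
  rw [h1, h2, h3, one_smul, smul_neg, ← sub_eq_add_neg]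
  match_scalars
  field_simp
  ring


lemma simplex_li (v : ℕ) (hv : 2 ≤ v) (a : Fin v → EuclideanSpace ℝ (Fin (v-1)))
    (ha : IsRegularSimplex v a) :
    LinearIndependent ℝ (fun i : Fin (v-1) => a ⟨i.1+1, by omega⟩) := by
  obtain ⟨ha1, ha2⟩ := ha
  have hv0 : (v:ℝ) - 1 ≠ 0 := by
    have : (2:ℝ) ≤ v := by exact_mod_cast hv
    linarith
  have h1 : ∀ i, ⟪a i, a i⟫ = 1 := fun i => by
    rw [real_inner_self_eq_norm_sq, ha1 i]; norm_num
  rw [Fintype.linearIndependent_iff]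
  intro g hg i
  set f : Fin (v-1) → Fin v := fun i => ⟨i.1+1, by omega⟩ with hf
  have hf0 : ∀ i, f i ≠ ⟨0, by omega⟩ := fun i => by
    simp only [hf, Ne, Fin.mk.injEq]; omega
  have hfinj : ∀ i j, f i = f j → i = j := fun i j h => by
    simp only [hf, Fin.mk.injEq] at h; exact Fin.ext (by omega)
  -- sum of g is 0
  have hsg : ∑ k, g k = 0 := by
    have := congrArg (fun x => ⟪a ⟨0, by omega⟩, x⟫) hg
    simp only [inner_sum, inner_smul_right, inner_zero_right] at this
    have heq : ∀ k, ⟪a ⟨0, by omega⟩, a (f k)⟫ = -1/((v:ℝ)-1) :=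
      fun k => ha2 _ _ (Ne.symm (hf0 k))
    rw [Finset.sum_congr rfl (fun k _ => by rw [heq k])] at this
    rw [← Finset.sum_mul] at this
    have := mul_eq_zero.mp this
    rcases this with h | h
    · exact h
    · exact absurd h (by field_simp; norm_num)
  -- inner with a (f i)
  have := congrArg (fun x => ⟪a (f i), x⟫) hg
  simp only [inner_sum, inner_smul_right, inner_zero_right] at this
  have heq : ∀ k, ⟪a (f i), a (f k)⟫ = if k = i then 1 else -1/((v:ℝ)-1) := by
    intro k
    by_cases h : k = i
    · simp [h, h1, ha1]
    · rw [if_neg h]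
      exact ha2 _ _ (fun hh => h (hfinj _ _ hh.symm))
  rw [Finset.sum_congr rfl (fun k _ => by rw [heq k])] at this
  rw [← Finset.add_sum_erase _ _ (Finset.mem_univ i)] at this
  rw [if_pos rfl, mul_one] at this
  have h2 : ∑ k ∈ Finset.univ.erase i, (g k * if k = i then (1:ℝ) else -1/((v:ℝ)-1))
      = (∑ k ∈ Finset.univ.erase i, g k) * (-1/((v:ℝ)-1)) := by
    rw [Finset.sum_mul]
    exact Finset.sum_congr rfl fun k hk => by rw [if_neg (Finset.ne_of_mem_erase hk)]
  rw [h2, Finset.sum_erase_eq_sub (Finset.mem_univ i), hsg, zero_sub] at this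
  have hvne : (v:ℝ) ≠ 0 := by positivity
  field_simp at this
  have h3 : g i * (v:ℝ) = 0 := by linear_combination this
  rcases mul_eq_zero.mp h3 with h | h
  · exact h
  · exact absurd h hvne


lemma simplex_frame (v : ℕ) (hv : 2 ≤ v) (a : Fin v → EuclideanSpace ℝ (Fin (v-1)))
    (ha : IsRegularSimplex v a) (x y : EuclideanSpace ℝ (Fin (v-1))) :
    ∑ k, ⟪a k, x⟫ * ⟪a k, y⟫ = ((v:ℝ)/((v:ℝ)-1)) * ⟪x, y⟫ := by
  have card_eq : Fintype.card (Fin (v-1)) = Module.finrank ℝ (EuclideanSpace ℝ (Fin (v-1))) := by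
    simp
  haveI : Nonempty (Fin (v-1)) := ⟨⟨0, by omega⟩⟩
  let β := basisOfLinearIndependentOfCardEqFinrank (simplex_li v hv a ha) card_eq
  have hβ : ∀ i, β i = a ⟨i.1+1, by omega⟩ := fun i => by
    simp [β, coe_basisOfLinearIndependentOfCardEqFinrank]
  let T : EuclideanSpace ℝ (Fin (v-1)) →ₗ[ℝ] EuclideanSpace ℝ (Fin (v-1)) :=
  { toFun := fun z => ∑ k, ⟪a k, z⟫ • a k,
    map_add' := fun z w => by
      simp [inner_add_right, add_smul, Finset.sum_add_distrib],
    map_smul' := fun c z => by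
      simp [inner_smul_right, mul_smul, Finset.smul_sum] }
  have hTeq : T = ((v:ℝ)/((v:ℝ)-1)) • LinearMap.id := by
    refine Module.Basis.ext β fun i => ?_
    simp only [T, LinearMap.coe_mk, AddHom.coe_mk, LinearMap.smul_apply, LinearMap.id_coe,
      id_eq, hβ i]
    exact simplex_frame_vec v hv a ha _
  have hT : ∑ k, ⟪a k, x⟫ • a k = ((v:ℝ)/((v:ℝ)-1)) • x := by
    have := DFunLike.congr_fun hTeq x
    simpa [T] using this
  calc ∑ k, ⟪a k, x⟫ * ⟪a k, y⟫ = ⟪∑ k, ⟪a k, x⟫ • a k, y⟫ := by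
        rw [sum_inner]
        exact Finset.sum_congr rfl fun k _ => (real_inner_smul_left _ _ _).symm
    _ = ((v:ℝ)/((v:ℝ)-1)) * ⟪x, y⟫ := by rw [hT, real_inner_smul_left]


theorem stmt_5 (v : ℕ) (hv : 2 ≤ v) (γ ζ : ℝ) (hγζ : γ ≠ ζ)
    (a b : Fin v → EuclideanSpace ℝ (Fin (v - 1)))
    (ha : IsRegularSimplex v a) (hb : IsRegularSimplex v b)
    (hlink : AreLinked v a b γ ζ)
    (B : Fin v → Set (Fin v)) (hB : ∀ j, B j = {i | ⟪a i, b j⟫ = γ}) :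
    (∀ j, ((B j).ncard : ℝ) = (v : ℝ) * ζ / (ζ - γ)) ∧
    (∀ s t : Fin v, s ≠ t →
      ((B s ∩ B t).ncard : ℝ) =
        ((v : ℝ) * ζ ^ 2 - (v : ℝ) / ((v : ℝ) - 1) ^ 2) / (ζ - γ) ^ 2) := by
  classical
  have hv0 : (v:ℝ) - 1 ≠ 0 := by
    have : (2:ℝ) ≤ v := by exact_mod_cast hv
    linarith
  have hζγ : ζ - γ ≠ 0 := sub_ne_zero.mpr (Ne.symm hγζ)
  set F : Fin v → Finset (Fin v) :=
    fun j => Finset.univ.filter (fun i => ⟪a i, b j⟫ = γ) with hF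
  have hmem : ∀ j i, i ∈ F j ↔ ⟪a i, b j⟫ = γ := by
    intro j i; simp [hF]
  have hnot : ∀ j i, i ∉ F j → ⟪a i, b j⟫ = ζ := by
    intro j i hi
    rcases hlink i j with h | h
    · exact absurd ((hmem j i).mpr h) hi
    · exact h
  have hBF : ∀ j, B j = ↑(F j) := by
    intro j
    rw [hB j]
    ext i
    simp [hF]
  have hsum0 : ∀ j, ∑ i, ⟪a i, b j⟫ = 0 := by
    intro j
    rw [← sum_inner, simplex_sum_zero v hv a ha, inner_zero_left]
  -- block sizes
  have hcard : ∀ j, ((F j).card : ℝ) * (γ - ζ) = -((v:ℝ) * ζ) := by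
    intro j
    have e1 : ∑ i, (⟪a i, b j⟫ - ζ) = -((v:ℝ) * ζ) := by
      rw [Finset.sum_sub_distrib, hsum0 j, Finset.sum_const, Finset.card_univ,
        Fintype.card_fin, nsmul_eq_mul]
      ring
    have e2 : ∑ i, (⟪a i, b j⟫ - ζ) = ((F j).card : ℝ) * (γ - ζ) := by
      rw [← Finset.sum_filter_add_sum_filter_not Finset.univ (fun i => ⟪a i, b j⟫ = γ)]
      have h1 : ∑ i ∈ Finset.univ.filter (fun i => ⟪a i, b j⟫ = γ), (⟪a i, b j⟫ - ζ)
          = ((F j).card : ℝ) * (γ - ζ) := by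
        rw [Finset.sum_congr rfl (fun i hi => by
          rw [(Finset.mem_filter.mp hi).2]), Finset.sum_const, nsmul_eq_mul, hF]
      have h2 : ∑ i ∈ Finset.univ.filter (fun i => ¬ ⟪a i, b j⟫ = γ), (⟪a i, b j⟫ - ζ)
          = 0 := by
        refine Finset.sum_eq_zero fun i hi => ?_
        have : i ∉ F j := by
          simp only [hF, Finset.mem_filter] at *
          tauto
        rw [hnot j i this, sub_self]
      rw [h1, h2, add_zero]
    rw [← e2, e1]
  constructor
  · intro j
    rw [hBF j, Set.ncard_coe_finset]
    rw [eq_div_iff hζγ]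
    linear_combination -(hcard j)
  · intro s t hst
    have hQ : ∑ i, ⟪a i, b s⟫ * ⟪a i, b t⟫ = ((v:ℝ)/((v:ℝ)-1)) * (-1/((v:ℝ)-1)) := by
      rw [simplex_frame v hv a ha, hb.2 s t hst]
    have e1 : ∑ i, (⟪a i, b s⟫ - ζ) * (⟪a i, b t⟫ - ζ)
        = ((F s ∩ F t).card : ℝ) * (γ - ζ)^2 := by
      rw [← Finset.sum_subset (Finset.subset_univ (F s ∩ F t)) ?_]
      · rw [Finset.sum_congr rfl (fun i hi => ?_), Finset.sum_const, nsmul_eq_mul]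
        have his := Finset.mem_inter.mp hi
        rw [(hmem s i).mp his.1, (hmem t i).mp his.2]
        ring
      · intro i _ hi
        rcases not_and_or.mp (fun h : i ∈ F s ∧ i ∈ F t => hi (Finset.mem_inter.mpr h)) with h | h
        · rw [hnot s i h, sub_self, zero_mul]
        · rw [hnot t i h, sub_self, mul_zero]
    have e2 : ∑ i, (⟪a i, b s⟫ - ζ) * (⟪a i, b t⟫ - ζ)
        = ((v:ℝ)/((v:ℝ)-1)) * (-1/((v:ℝ)-1)) + (v:ℝ) * ζ^2 := by
      have expand : ∀ i : Fin v, (⟪a i, b s⟫ - ζ) * (⟪a i, b t⟫ - ζ)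
          = ⟪a i, b s⟫ * ⟪a i, b t⟫ - ζ * ⟪a i, b s⟫ - ζ * ⟪a i, b t⟫ + ζ^2 := by
        intro i; ring
      rw [Finset.sum_congr rfl (fun i _ => expand i)]
      rw [Finset.sum_add_distrib, Finset.sum_sub_distrib, Finset.sum_sub_distrib,
        ← Finset.mul_sum, ← Finset.mul_sum, hsum0 s, hsum0 t, hQ,
        Finset.sum_const, Finset.card_univ, Fintype.card_fin, nsmul_eq_mul]
      ring
    rw [hBF s, hBF t, ← Finset.coe_inter, Set.ncard_coe_finset]
    rw [eq_div_iff (pow_ne_zero 2 hζγ)]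
    rw [e2] at e1
    field_simp at e1 ⊢
    linear_combination -e1
end

section
/- Let v ≥ 2 and let a, b, c : Fin v → EuclideanSpace ℝ (Fin (v−1)) be regular simplices such that a is linked with b and a is linked with c, in both cases with the same inner products γ, ζ (γ ≠ ζ). Define B j := {i | ⟪a i, b j⟫ = γ} and C m := {i | ⟪a i, c m⟫ = γ}. Then for all j and m, (|B j ∩ C m| : ℝ) = (1/(γ−ζ)²)·(v·ζ² + (v/(v−1))·⟪b j, c m⟫). In particular, if b and c are also linked with inner products γ, ζ, then |B j ∩ C m| takes only two values μ and ν, determined solely by whether ⟪b j, c m⟫ equals γ or ζ. -/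
open RealInnerProductSpace

section Aux

variable {v : ℕ} {a : Fin v → EuclideanSpace ℝ (Fin (v - 1))}

lemma gram (ha : IsRegularSimplex v a) (i j : Fin v) :
    ⟪a i, a j⟫ = if j = i then 1 else -1 / ((v : ℝ) - 1) := by
  rcases eq_or_ne j i with h | h
  · subst h
    simp only [if_true]
    rw [real_inner_self_eq_norm_sq, ha.1 j]
    norm_num
  · simp [h, ha.2 i j (Ne.symm h)]

lemma sum_a_zero (hv : 2 ≤ v) (ha : IsRegularSimplex v a) : ∑ i, a i = 0 := by
  have hvv : (2:ℝ) ≤ v := by exact_mod_cast hv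
  have hv1 : (v : ℝ) - 1 ≠ 0 := by nlinarith
  have h : ⟪∑ i, a i, ∑ j, a j⟫ = 0 := by
    rw [sum_inner]
    have key : ∀ i ∈ Finset.univ, ⟪a i, ∑ j, a j⟫ = 0 := by
      intro i _
      rw [inner_sum]
      have h2 : ∀ j ∈ Finset.univ, ⟪a i, a j⟫
          = (-1 / ((v : ℝ) - 1)) + (if j = i then (1 + 1/((v:ℝ)-1)) else 0) := by
        intro j _
        rw [gram ha]
        rcases eq_or_ne j i with h | h
        · simp [h]; field_simp; ring
        · simp [h]
      rw [Finset.sum_congr rfl h2, Finset.sum_add_distrib, Finset.sum_const,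
        Finset.sum_ite_eq' Finset.univ i]
      simp only [Finset.card_univ, Fintype.card_fin, Finset.mem_univ, if_true, nsmul_eq_mul]
      field_simp
      ring
    rw [Finset.sum_congr rfl key]
    simp
  exact inner_self_eq_zero.mp h

lemma sum_inner_a_zero (hv : 2 ≤ v) (ha : IsRegularSimplex v a)
    (x : EuclideanSpace ℝ (Fin (v - 1))) : ∑ i, ⟪a i, x⟫ = 0 := by
  rw [← sum_inner, sum_a_zero hv ha, inner_zero_left]

lemma span_a_top (hv : 2 ≤ v) (ha : IsRegularSimplex v a) :
    Submodule.span ℝ (Set.range a) = ⊤ := by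
  have hvv : (2:ℝ) ≤ v := by exact_mod_cast hv
  have hv1 : (1:ℝ) ≤ (v : ℝ) - 1 := by linarith
  have hv1' : ((v : ℝ) - 1) ≠ 0 := by linarith
  have hvne : (v : ℝ) ≠ 0 := by linarith
  have hle : v - 1 ≤ v := Nat.sub_le v 1
  set e : Fin (v-1) → Fin v := fun i => Fin.castLE hle i with he
  have hinj : Function.Injective e := fun i j h => by
    simpa [he, Fin.ext_iff] using h
  have hli : LinearIndependent ℝ (fun i : Fin (v-1) => a (e i)) := by
    rw [Fintype.linearIndependent_iff]
    intro g hg j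
    have key : ∀ u : Fin (v-1), g u * (v:ℝ) = ∑ i, g i := by
      intro u
      have h0 : ⟪a (e u), ∑ i, g i • a (e i)⟫ = 0 := by rw [hg, inner_zero_right]
      rw [inner_sum] at h0
      have h2 : ∀ i ∈ Finset.univ, ⟪a (e u), g i • a (e i)⟫
          = g i * (-1 / ((v : ℝ) - 1)) + (if i = u then g i * (1 + 1/((v:ℝ)-1)) else 0) := by
        intro i _
        rw [real_inner_smul_right, gram ha]
        rcases eq_or_ne i u with h | h
        · simp [h]; field_simp; ring
        · have hne : e i ≠ e u := fun hh => h (hinj hh)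
          simp [hne, h]
      rw [Finset.sum_congr rfl h2, Finset.sum_add_distrib,
        Finset.sum_ite_eq' Finset.univ u] at h0
      simp only [Finset.mem_univ, if_true, ← Finset.sum_mul] at h0
      have hexp : ((∑ i, g i) * (-1 / ((v:ℝ)-1)) + g u * (1 + 1/((v:ℝ)-1))) * ((v:ℝ)-1)
          = (∑ i, g i) * (-1) + g u * (v:ℝ) := by
        field_simp
        ring
      rw [h0, zero_mul] at hexp
      linarith [hexp]
    have hcast : ((v - 1 : ℕ) : ℝ) = (v:ℝ) - 1 := by
      have h1 : 1 ≤ v := by omega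
      push_cast [h1]
      ring
    have hsum : (∑ i, g i) * (v:ℝ) = ((v:ℝ)-1) * (∑ i, g i) := by
      have hcongr := Finset.sum_congr rfl
        (fun u (_ : u ∈ (Finset.univ : Finset (Fin (v-1)))) => key u)
      rw [← Finset.sum_mul, Finset.sum_const, Finset.card_univ, Fintype.card_fin,
        nsmul_eq_mul, hcast] at hcongr
      linarith [hcongr]
    have hS0 : (∑ i, g i) = 0 := by linear_combination hsum
    have hj := key j
    rw [hS0] at hj
    have := mul_eq_zero.mp hj
    rcases this with h | h
    · exact h
    · exact absurd h hvne
  have hcard : Fintype.card (Fin (v-1)) = Module.finrank ℝ (EuclideanSpace ℝ (Fin (v-1))) := by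
    simp [finrank_euclideanSpace_fin]
  have htop := hli.span_eq_top_of_card_eq_finrank' hcard
  rw [eq_top_iff, ← htop]
  apply Submodule.span_mono
  rintro _ ⟨i, rfl⟩
  exact ⟨e i, rfl⟩

lemma frame (hv : 2 ≤ v) (ha : IsRegularSimplex v a) (x y : EuclideanSpace ℝ (Fin (v - 1))) :
    ∑ i, ⟪a i, x⟫ * ⟪a i, y⟫ = ((v:ℝ)/((v:ℝ)-1)) * ⟪x, y⟫ := by
  have hvv : (2:ℝ) ≤ v := by exact_mod_cast hv
  have hv1 : (1:ℝ) ≤ (v : ℝ) - 1 := by linarith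
  have hv1' : ((v : ℝ) - 1) ≠ 0 := by linarith
  set z : EuclideanSpace ℝ (Fin (v-1)) :=
    (∑ i, ⟪a i, x⟫ • a i) - ((v:ℝ)/((v:ℝ)-1)) • x with hz
  have hperp : ∀ u : Fin v, ⟪a u, z⟫ = 0 := by
    intro u
    rw [hz, inner_sub_right, inner_sum, real_inner_smul_right]
    have h2 : ∀ i ∈ Finset.univ, ⟪a u, ⟪a i, x⟫ • a i⟫
        = ⟪a i, x⟫ * (-1 / ((v : ℝ) - 1)) + (if i = u then ⟪a i, x⟫ * (1 + 1/((v:ℝ)-1)) else 0) := by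
      intro i _
      rw [real_inner_smul_right, gram ha]
      rcases eq_or_ne i u with h | h
      · simp [h]; field_simp; ring
      · simp [h]
    rw [Finset.sum_congr rfl h2, Finset.sum_add_distrib,
      Finset.sum_ite_eq' Finset.univ u]
    simp only [Finset.mem_univ, if_true, ← Finset.sum_mul]
    rw [sum_inner_a_zero hv ha x]
    field_simp
    ring
  have hz0 : z = 0 := by
    have hmem : z ∈ Submodule.span ℝ (Set.range a) := by
      rw [span_a_top hv ha]; trivial
    obtain ⟨g, hg⟩ := (Finsupp.mem_span_range_iff_exists_finsupp).mp hmem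
    have hzz : ⟪z, z⟫ = 0 := by
      nth_rewrite 1 [← hg]
      rw [Finsupp.sum, sum_inner]
      refine Finset.sum_eq_zero fun i _ => ?_
      rw [real_inner_smul_left, hperp i, mul_zero]
    exact inner_self_eq_zero.mp hzz
  have hzz : (∑ i, ⟪a i, x⟫ • a i) = ((v:ℝ)/((v:ℝ)-1)) • x := sub_eq_zero.mp hz0
  calc ∑ i, ⟪a i, x⟫ * ⟪a i, y⟫ = ⟪∑ i, ⟪a i, x⟫ • a i, y⟫ := by
        rw [sum_inner]; simp only [real_inner_smul_left]
    _ = ((v:ℝ)/((v:ℝ)-1)) * ⟪x, y⟫ := by rw [hzz, real_inner_smul_left]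

end Aux

theorem stmt_6 (v : ℕ) (hv : 2 ≤ v) (γ ζ : ℝ) (hγζ : γ ≠ ζ)
    (a b c : Fin v → EuclideanSpace ℝ (Fin (v - 1)))
    (ha : IsRegularSimplex v a) (hb : IsRegularSimplex v b) (hc : IsRegularSimplex v c)
    (hab : AreLinked v a b γ ζ) (hac : AreLinked v a c γ ζ)
    (B C : Fin v → Set (Fin v))
    (hB : ∀ j, B j = {i | ⟪a i, b j⟫ = γ})
    (hC : ∀ m, C m = {i | ⟪a i, c m⟫ = γ}) :
    (∀ j m, ((B j ∩ C m).ncard : ℝ) =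
      (1 / (γ - ζ) ^ 2) * ((v : ℝ) * ζ ^ 2 + ((v : ℝ) / ((v : ℝ) - 1)) * ⟪b j, c m⟫)) ∧
    (AreLinked v b c γ ζ →
      ∃ μ ν : ℕ, ∀ j m,
        (⟪b j, c m⟫ = γ → (B j ∩ C m).ncard = μ) ∧
        (⟪b j, c m⟫ = ζ → (B j ∩ C m).ncard = ν)) := by
  classical
  have hd : (γ - ζ) ≠ 0 := sub_ne_zero.mpr hγζ
  have Hmain : ∀ j m, ((B j ∩ C m).ncard : ℝ) =
      (1 / (γ - ζ) ^ 2) * ((v : ℝ) * ζ ^ 2 + ((v : ℝ) / ((v : ℝ) - 1)) * ⟪b j, c m⟫) := by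
    intro j m
    have hcount : B j ∩ C m
        = ↑(Finset.univ.filter fun i => ⟪a i, b j⟫ = γ ∧ ⟪a i, c m⟫ = γ) := by
      ext i
      simp [hB, hC]
    have h1 : ((B j ∩ C m).ncard : ℝ)
        = ∑ i, (if ⟪a i, b j⟫ = γ ∧ ⟪a i, c m⟫ = γ then (1:ℝ) else 0) := by
      rw [hcount, Set.ncard_coe_finset, Finset.card_filter]
      push_cast
      rfl
    have h2 : ∀ i, (if ⟪a i, b j⟫ = γ ∧ ⟪a i, c m⟫ = γ then (1:ℝ) else 0)
        = ((⟪a i, b j⟫ - ζ)/(γ-ζ)) * ((⟪a i, c m⟫ - ζ)/(γ-ζ)) := by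
      intro i
      rcases hab i j with h | h <;> rcases hac i m with h' | h' <;>
        simp [h, h', hγζ, Ne.symm hγζ, div_self hd]
    have expand : ∀ i, ((⟪a i, b j⟫ - ζ)/(γ-ζ)) * ((⟪a i, c m⟫ - ζ)/(γ-ζ))
        = (1/(γ-ζ)^2) * (⟪a i, b j⟫ * ⟪a i, c m⟫ - ζ * ⟪a i, b j⟫ - ζ * ⟪a i, c m⟫ + ζ^2) := by
      intro i
      field_simp
      ring
    have hs1 : ∑ i, ⟪a i, b j⟫ = 0 := sum_inner_a_zero hv ha (b j)
    have hs2 : ∑ i, ⟪a i, c m⟫ = 0 := sum_inner_a_zero hv ha (c m)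
    have hs3 : ∑ i, ⟪a i, b j⟫ * ⟪a i, c m⟫ = ((v:ℝ)/((v:ℝ)-1)) * ⟪b j, c m⟫ :=
      frame hv ha (b j) (c m)
    rw [h1, Finset.sum_congr rfl (fun i _ => h2 i),
      Finset.sum_congr rfl (fun i _ => expand i), ← Finset.mul_sum]
    have hsplit : ∑ i, (⟪a i, b j⟫ * ⟪a i, c m⟫ - ζ * ⟪a i, b j⟫ - ζ * ⟪a i, c m⟫ + ζ^2)
        = ((v:ℝ)/((v:ℝ)-1)) * ⟪b j, c m⟫ - ζ * 0 - ζ * 0 + (v:ℝ) * ζ^2 := by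
      rw [Finset.sum_add_distrib, Finset.sum_sub_distrib, Finset.sum_sub_distrib,
        ← Finset.mul_sum, ← Finset.mul_sum, hs1, hs2, hs3, Finset.sum_const,
        Finset.card_univ, Fintype.card_fin, nsmul_eq_mul]
    rw [hsplit]
    ring
  refine ⟨Hmain, fun hbc => ?_⟩
  refine ⟨⌊(1 / (γ - ζ) ^ 2) * ((v : ℝ) * ζ ^ 2 + ((v : ℝ) / ((v : ℝ) - 1)) * γ)⌋₊,
    ⌊(1 / (γ - ζ) ^ 2) * ((v : ℝ) * ζ ^ 2 + ((v : ℝ) / ((v : ℝ) - 1)) * ζ)⌋₊,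
    fun j m => ⟨fun hg => ?_, fun hg => ?_⟩⟩ <;>
  · have h := Hmain j m
    rw [hg] at h
    rw [← h, Nat.floor_natCast]
end

section
/- Let {B i j} be a non-degenerate LSSD(v,k,λ;w) with natural-number parameters, w ≥ 3, and μ > ν (μ-heavy), and set s := μ − ν. Then there exists f : Fin w → Fin v → EuclideanSpace ℝ (Fin (v−1)) such that each f i is a regular simplex, and for all i ≠ j and all a, b ∈ Fin v: ⟪f i a, f j b⟫ = (v−k)/((v−1)·s) if (B i j) a b = 1, and ⟪f i a, f j b⟫ = −k/((v−1)·s) if (B i j) a b = 0. That is, every LSSD gives rise to a set of w pairwise linked regular simplices in ℝ^(v−1). -/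
open Matrix RealInnerProductSpace

set_option maxHeartbeats 2000000 in
theorem stmt_8 (v w k lam mu nu : ℕ) (hw : 3 ≤ w)
    (hk1 : 1 < k) (hkv : k < v - 1) (hmn : nu < mu)
    (B : Fin w → Fin w → Matrix (Fin v) (Fin v) ℝ)
    (hB : IsLSSD v w (k : ℝ) (lam : ℝ) (mu : ℝ) (nu : ℝ) B) :
    ∃ f : Fin w → Fin v → EuclideanSpace ℝ (Fin (v - 1)),
      (∀ i, IsRegularSimplex v (f i)) ∧
      ∀ i j : Fin w, i ≠ j → ∀ a b : Fin v,
        (B i j a b = 1 →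
          ⟪f i a, f j b⟫ = ((v : ℝ) - k) / (((v : ℝ) - 1) * ((mu : ℝ) - nu))) ∧
        (B i j a b = 0 →
          ⟪f i a, f j b⟫ = -(k : ℝ) / (((v : ℝ) - 1) * ((mu : ℝ) - nu))) := by
  obtain ⟨h01, hT, hdes, hlink⟩ := hB
  have hv4 : 4 ≤ v := by omega
  set V : ℝ := (v : ℝ) with hVdef
  set s : ℝ := (mu : ℝ) - (nu : ℝ) with hsdef
  have hs0 : 0 < s := by rw [hsdef]; exact sub_pos.2 (by exact_mod_cast hmn)
  have hs0' : s ≠ 0 := ne_of_gt hs0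
  have hV4 : (4:ℝ) ≤ V := by rw [hVdef]; exact_mod_cast hv4
  have hV1 : V - 1 ≠ 0 := by linarith
  have hk2 : (2:ℝ) ≤ (k:ℝ) := by exact_mod_cast hk1
  have hkV : (k:ℝ) + 2 ≤ V := by rw [hVdef]; exact_mod_cast (by omega : k + 2 ≤ v)
  -- entries squared
  have hsq : ∀ (i j : Fin w), i ≠ j → ∀ a b, B i j a b * B i j a b = B i j a b := by
    intro i j hij a b
    rcases h01 i j hij a b with h | h <;> rw [h] <;> ring
  -- row and column sums
  have hrow : ∀ (i j : Fin w), i ≠ j → ∀ a, ∑ c, B i j a c = (k:ℝ) := by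
    intro i j hij a
    have := congrFun (congrFun (hdes i j hij).1 a) a
    simp only [Matrix.mul_apply, Matrix.transpose_apply, Matrix.add_apply,
      Matrix.smul_apply, Matrix.one_apply_eq, _root_.J, Matrix.of_apply, smul_eq_mul] at this
    rw [Finset.sum_congr rfl (fun c _ => hsq i j hij a c)] at this
    rw [this]; ring
  have hcol : ∀ (i j : Fin w), i ≠ j → ∀ b, ∑ c, B i j c b = (k:ℝ) := by
    intro i j hij b
    have := congrFun (congrFun (hdes i j hij).2 b) b
    simp only [Matrix.mul_apply, Matrix.transpose_apply, Matrix.add_apply,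
      Matrix.smul_apply, Matrix.one_apply_eq, _root_.J, Matrix.of_apply, smul_eq_mul] at this
    rw [Finset.sum_congr rfl (fun c _ => hsq i j hij c b)] at this
    rw [this]; ring
  -- products with J
  have hJJ : _root_.J v * _root_.J v = V • _root_.J v := by
    ext a b
    simp [Matrix.mul_apply, _root_.J, Finset.card_univ, hVdef]
  have hBJ : ∀ (i j : Fin w), i ≠ j → B i j * _root_.J v = (k:ℝ) • _root_.J v := by
    intro i j hij; ext a b
    simp [Matrix.mul_apply, _root_.J, hrow i j hij a]
  have hJB : ∀ (i j : Fin w), i ≠ j → _root_.J v * B i j = (k:ℝ) • _root_.J v := by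
    intro i j hij; ext a b
    simp [Matrix.mul_apply, _root_.J, hcol i j hij b]
  -- distinct indices
  let i0 : Fin w := ⟨0, by omega⟩
  let i1 : Fin w := ⟨1, by omega⟩
  let i2 : Fin w := ⟨2, by omega⟩
  have h01' : i0 ≠ i1 := by simp [i0, i1, Fin.ext_iff]
  have h02' : i0 ≠ i2 := by simp [i0, i2, Fin.ext_iff]
  have h12' : i1 ≠ i2 := by simp [i1, i2, Fin.ext_iff]
  let a0 : Fin v := ⟨0, by omega⟩
  let a1 : Fin v := ⟨1, by omega⟩
  have ha01 : a0 ≠ a1 := by simp [a0, a1, Fin.ext_iff]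
  -- λ identity : k*k = (k - lam) + lam * V
  have hlamid : (k:ℝ)*k = ((k:ℝ) - lam) + lam * V := by
    have h1 : _root_.J v * (B i0 i1 * (B i0 i1)ᵀ) = ((k:ℝ)*k) • _root_.J v := by
      rw [← Matrix.mul_assoc, hJB i0 i1 h01', Matrix.smul_mul, ← hT i0 i1 h01',
        hJB i1 i0 (Ne.symm h01'), smul_smul]
    rw [(hdes i0 i1 h01').1, Matrix.mul_add, Matrix.mul_smul, Matrix.mul_smul,
      Matrix.mul_one, hJJ, smul_smul] at h1
    have := congrFun (congrFun h1 a0) a0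
    simp only [Matrix.add_apply, Matrix.smul_apply, _root_.J, Matrix.of_apply,
      smul_eq_mul, mul_one] at this
    linarith
  -- k - lam > 0
  have hklam : ((k:ℝ) - lam) * (V - 1) = (k:ℝ) * (V - k) := by ring_nf; linarith [hlamid]
  have hklam0 : 0 < (k:ℝ) - lam := by
    have h1 : (0:ℝ) < (k:ℝ) * (V - k) := by nlinarith
    nlinarith
  -- ν identity : k*k = ν*V + s*k
  have hnuid : (k:ℝ)*k = (nu:ℝ) * V + s * k := by
    have h1 : _root_.J v * (B i1 i0 * B i0 i2) = ((k:ℝ)*k) • _root_.J v := by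
      rw [← Matrix.mul_assoc, hJB i1 i0 (Ne.symm h01'), Matrix.smul_mul,
        hJB i0 i2 h02', smul_smul]
    rw [hlink i0 i1 i2 h01' h02' h12', Matrix.mul_add, Matrix.mul_smul, Matrix.mul_smul,
      hJJ, hJB i1 i2 h12', smul_smul, smul_smul] at h1
    have := congrFun (congrFun h1 a0) a0
    simp only [Matrix.add_apply, Matrix.smul_apply, _root_.J, Matrix.of_apply,
      smul_eq_mul, mul_one] at this
    linarith

  -- s*s = k - lam
  have hJT : (_root_.J v)ᵀ = _root_.J v := by ext a b; simp [_root_.J]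
  have hssid : s * s = (k:ℝ) - lam := by
    have h1 := (hdes i0 i2 h02').1
    rw [← hT i0 i2 h02'] at h1
    have h2 := (hdes i1 i0 (Ne.symm h01')).1
    rw [← hT i1 i0 (Ne.symm h01')] at h2
    have h3 := (hdes i1 i2 h12').1
    rw [← hT i1 i2 h12'] at h3
    have hD1 : (B i1 i0 * B i0 i2) * (B i1 i0 * B i0 i2)ᵀ
        = (((k:ℝ)-(lam:ℝ))*((k:ℝ)-(lam:ℝ))) • (1 : Matrix (Fin v) (Fin v) ℝ)
          + (((k:ℝ)-(lam:ℝ))*(lam:ℝ) + (lam:ℝ)*((k:ℝ)*k)) • _root_.J v := by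
      rw [Matrix.transpose_mul, ← hT i0 i2 h02', ← hT i1 i0 (Ne.symm h01')]
      rw [show B i1 i0 * B i0 i2 * (B i2 i0 * B i0 i1)
          = B i1 i0 * ((B i0 i2 * B i2 i0) * B i0 i1) from by
        rw [Matrix.mul_assoc, Matrix.mul_assoc]]
      rw [h1]
      simp only [Matrix.mul_add, Matrix.add_mul, Matrix.mul_smul, Matrix.smul_mul,
        Matrix.mul_one, Matrix.one_mul, Matrix.mul_assoc, hJB i0 i1 h01',
        hBJ i1 i0 (Ne.symm h01'), hJJ, h2]
      module
    have hD2 : (B i1 i0 * B i0 i2) * (B i1 i0 * B i0 i2)ᵀ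
        = ((nu:ℝ)*((nu:ℝ)*V) + ((nu:ℝ)*(s*(k:ℝ)) + (s*((nu:ℝ)*(k:ℝ)) + s*(s*(lam:ℝ))))) • _root_.J v
          + (s*(s*((k:ℝ)-(lam:ℝ)))) • (1 : Matrix (Fin v) (Fin v) ℝ) := by
      have hE : B i1 i0 * B i0 i2 = (nu:ℝ) • _root_.J v + s • B i1 i2 :=
        hlink i0 i1 i2 h01' h02' h12'
      have hRt : (B i1 i2)ᵀ = B i2 i1 := (hT i1 i2 h12').symm
      rw [hE, Matrix.transpose_add, Matrix.transpose_smul, Matrix.transpose_smul, hJT, hRt]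
      simp only [Matrix.add_mul, Matrix.mul_add, Matrix.smul_mul, Matrix.mul_smul,
        hJJ, hJB i2 i1 (Ne.symm h12'), hBJ i1 i2 h12', h3]
      module
    have heq := hD1.symm.trans hD2
    have hoff := congrFun (congrFun heq a0) a1
    have hdia := congrFun (congrFun heq a0) a0
    simp only [Matrix.add_apply, Matrix.smul_apply, _root_.J, Matrix.of_apply,
      Matrix.one_apply, if_pos rfl, if_neg ha01, smul_eq_mul, mul_one, mul_zero,
      add_zero, zero_add] at hoff hdia
    have hkey : ((k:ℝ)-(lam:ℝ)) * (((k:ℝ)-(lam:ℝ)) - s * s) = 0 := by nlinarith [hoff, hdia]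
    rcases mul_eq_zero.mp hkey with h | h
    · exact absurd h (ne_of_gt hklam0)
    · linarith
  -- base simplex construction
  haveI : Fact (Module.finrank ℝ (EuclideanSpace ℝ (Fin v)) = (v-1)+1) :=
    ⟨by rw [finrank_euclideanSpace_fin]; omega⟩
  set ones : EuclideanSpace ℝ (Fin v) := WithLp.toLp 2 (fun _ => (1:ℝ)) with hones
  have hone0 : ones ≠ 0 := by
    intro h
    have : ones ⟨0, by omega⟩ = 0 := by rw [h]; rfl
    simp [hones] at this
  let φ := (OrthonormalBasis.fromOrthogonalSpanSingleton (𝕜 := ℝ) (v-1) hone0).repr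
  let u : Fin v → EuclideanSpace ℝ (Fin v) :=
    fun a => (EuclideanSpace.single a (1:ℝ)) - (V⁻¹ : ℝ) • ones
  have hV0 : V ≠ 0 := by linarith
  have hmem : ∀ a, u a ∈ (ℝ ∙ ones)ᗮ := by
    intro a
    rw [Submodule.mem_orthogonal_singleton_iff_inner_right]
    have h1 : ⟪ones, EuclideanSpace.single a (1:ℝ)⟫ = 1 := by
      rw [EuclideanSpace.inner_single_right]; simp [hones]
    have h2 : ⟪ones, ones⟫ = V := by
      rw [PiLp.inner_apply]; simp [real_inner_comm, PiLp.inner_apply, hones, hVdef]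
    simp only [u, inner_sub_right, inner_smul_right, h1, h2]
    field_simp
    ring
  have huu : ∀ a c : Fin v, ⟪u a, u c⟫ = (if a = c then 1 else 0) - V⁻¹ := by
    intro a c
    have h1 : ⟪EuclideanSpace.single a (1:ℝ), EuclideanSpace.single c (1:ℝ)⟫
        = if a = c then 1 else 0 := by
      rw [EuclideanSpace.inner_single_right]
      simp [EuclideanSpace.single_apply, eq_comm]
    have h2 : ⟪EuclideanSpace.single a (1:ℝ), ones⟫ = 1 := by
      rw [EuclideanSpace.inner_single_left]; simp [hones]
    have h3 : ⟪ones, EuclideanSpace.single c (1:ℝ)⟫ = 1 := by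
      rw [EuclideanSpace.inner_single_right]; simp [hones]
    have h4 : ⟪ones, ones⟫ = V := by rw [PiLp.inner_apply]; simp [PiLp.inner_apply, hones, hVdef]
    simp only [u, inner_sub_left, inner_sub_right, inner_smul_left, inner_smul_right,
      h1, h2, h3, h4, RCLike.conj_to_real]
    field_simp
    ring
  set c0 : ℝ := Real.sqrt (V / (V-1)) with hc0def
  have hc0 : c0 * c0 = V / (V-1) := Real.mul_self_sqrt (by
    apply div_nonneg <;> linarith)
  let f0 : Fin v → EuclideanSpace ℝ (Fin (v-1)) :=
    fun a => φ ⟨c0 • u a, Submodule.smul_mem _ _ (hmem a)⟩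
  have hG : ∀ a c : Fin v, ⟪f0 a, f0 c⟫ = ((if a = c then V else 0) - 1) / (V - 1) := by
    intro a c
    have hpres : ⟪f0 a, f0 c⟫ = ⟪c0 • u a, c0 • u c⟫ := by
      simp only [f0]
      rw [φ.inner_map_map]
      rfl
    rw [hpres, real_inner_smul_left, real_inner_smul_right, huu, ← mul_assoc, hc0]
    by_cases h : a = c
    · rw [if_pos h, if_pos h]; field_simp
    · rw [if_neg h, if_neg h]; field_simp; ring
  -- the linked system of simplices
  let coef : Fin w → Fin v → Fin v → ℝ := fun i a c =>
    if i = i0 then (if c = a then 1 else 0) else s⁻¹ * B i0 i c a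
  let f : Fin w → Fin v → EuclideanSpace ℝ (Fin (v-1)) := fun i a => ∑ c, coef i a c • f0 c
  -- the Gram computation
  have gram : ∀ x y : Fin v → ℝ, ⟪∑ c, x c • f0 c, ∑ d, y d • f0 d⟫
      = (V * (∑ c, x c * y c) - (∑ c, x c) * (∑ d, y d)) / (V-1) := by
    intro x y
    rw [sum_inner]
    have hrowg : ∀ c, ⟪x c • f0 c, ∑ d, y d • f0 d⟫
        = (V * (x c * y c) - x c * ∑ d, y d) / (V-1) := by
      intro c
      rw [inner_sum]
      simp only [real_inner_smul_left, real_inner_smul_right, hG]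
      rw [Finset.sum_congr rfl (fun d _ => by ring_nf :
        ∀ d ∈ Finset.univ, y d * (x c * (((if c = d then V else 0) - 1)/(V-1)))
          = (x c * y d * (if c = d then V else 0)) / (V-1) - (x c * y d)/(V-1))]
      rw [Finset.sum_sub_distrib, ← Finset.sum_div, ← Finset.sum_div]
      simp only [mul_ite, mul_zero, Finset.sum_ite_eq, Finset.mem_univ, if_true]
      rw [← Finset.mul_sum]
      ring
    rw [Finset.sum_congr rfl (fun c _ => hrowg c), ← Finset.sum_div]
    rw [Finset.sum_sub_distrib, ← Finset.mul_sum, ← Finset.sum_mul]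
  -- coefficient sums
  have hcsum : ∀ i a, ∑ c, coef i a c = if i = i0 then 1 else s⁻¹ * k := by
    intro i a
    by_cases hi : i = i0
    · simp [coef, hi]
    · simp only [coef, if_neg hi, ← Finset.mul_sum, hcol i0 i (fun h => hi h.symm) a]
  -- diagonal inner products
  have hdiag : ∀ i a b, ⟪f i a, f i b⟫ = ((if a = b then V else 0) - 1)/(V-1) := by
    intro i a b
    have := gram (coef i a) (coef i b)
    rw [show ⟪f i a, f i b⟫ = ⟪∑ c, coef i a c • f0 c, ∑ d, coef i b d • f0 d⟫ from rfl, this,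
      hcsum, hcsum]
    by_cases hi : i = i0
    · simp only [coef, if_pos hi]
      rw [Finset.sum_congr rfl (fun c _ => by
        by_cases h1 : c = a
        · subst h1; by_cases h2 : c = b <;> simp [h2]
        · simp [h1] :
        ∀ c ∈ Finset.univ, (if c = a then (1:ℝ) else 0) * (if c = b then 1 else 0)
          = if c = a then (if a = b then 1 else 0) else 0)]
      simp only [Finset.sum_ite_eq', Finset.mem_univ, if_true, if_pos hi]
      by_cases hab : a = b <;> simp [hab]
    · have hii0 : i0 ≠ i := fun h => hi h.symm
      simp only [coef, if_neg hi]
      have hBB : ∑ c, (s⁻¹ * B i0 i c a) * (s⁻¹ * B i0 i c b)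
          = s⁻¹ * s⁻¹ * (((k:ℝ)-(lam:ℝ)) * (if a = b then 1 else 0) + (lam:ℝ)) := by
        rw [Finset.sum_congr rfl (fun c _ => by rw [Matrix.transpose_apply]; ring :
          ∀ c ∈ Finset.univ, (s⁻¹ * B i0 i c a) * (s⁻¹ * B i0 i c b)
            = s⁻¹ * s⁻¹ * ((B i0 i)ᵀ a c * B i0 i c b)), ← Finset.mul_sum]
        congr 1
        have := congrFun (congrFun (hdes i0 i hii0).2 a) b
        rw [Matrix.mul_apply] at this
        rw [this]
        simp [_root_.J, Matrix.one_apply]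
      rw [hBB]
      have hs2 : s * s = (k:ℝ) - (lam:ℝ) := hssid
      by_cases hab : a = b
      · rw [if_pos hab, if_pos hab]
        field_simp
        nlinarith [hklam, hs2]
      · rw [if_neg hab, if_neg hab]
        field_simp
        nlinarith [hlamid, hs2]
  -- cross inner products
  have hcross : ∀ i j : Fin w, i ≠ j → ∀ a b,
      ⟪f i a, f j b⟫ = (V * B i j a b - (k:ℝ)) / ((V-1) * s) := by
    intro i j hij a b
    have hgr := gram (coef i a) (coef j b)
    rw [show ⟪f i a, f j b⟫ = ⟪∑ c, coef i a c • f0 c, ∑ d, coef j b d • f0 d⟫ from rfl, hgr,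
      hcsum, hcsum]
    by_cases hi : i = i0 <;> by_cases hj : j = i0
    · exact absurd (hi.trans hj.symm) hij
    · -- i = i0, j ≠ i0
      subst hi
      have hdot : ∑ c, coef i0 a c * coef j b c = s⁻¹ * B i0 j a b := by
        simp only [coef, if_pos rfl, if_neg hj, ite_mul, one_mul, zero_mul]
        simp [Finset.sum_ite_eq']
      rw [hdot, if_pos rfl, if_neg hj, div_eq_div_iff hV1 (mul_ne_zero hV1 hs0')]
      field_simp
    · -- i ≠ i0, j = i0
      subst hj
      have hii0 : i0 ≠ i := fun h => hi h.symm
      have hTi : B i i0 a b = B i0 i b a := by rw [hT i0 i hii0]; rfl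
      have hdot : ∑ c, coef i a c * coef i0 b c = s⁻¹ * B i i0 a b := by
        simp only [coef, if_neg hi, if_pos rfl, mul_ite, mul_one, mul_zero]
        simp [Finset.sum_ite_eq', hTi]
      rw [hdot, if_neg hi, if_pos rfl, div_eq_div_iff hV1 (mul_ne_zero hV1 hs0')]
      field_simp
    · -- i ≠ i0, j ≠ i0
      have hii0 : i0 ≠ i := fun h => hi h.symm
      have hjj0 : i0 ≠ j := fun h => hj h.symm
      have hdot : ∑ c, coef i a c * coef j b c
          = s⁻¹ * s⁻¹ * ((nu:ℝ) + s * B i j a b) := by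
        simp only [coef, if_neg hi, if_neg hj]
        rw [Finset.sum_congr rfl (fun c _ => by
          rw [show B i0 i c a = B i i0 a c from by rw [hT i0 i hii0]; rfl]; ring :
          ∀ c ∈ Finset.univ, (s⁻¹ * B i0 i c a) * (s⁻¹ * B i0 j c b)
            = s⁻¹ * s⁻¹ * (B i i0 a c * B i0 j c b)), ← Finset.mul_sum]
        congr 1
        rw [← Matrix.mul_apply, hlink i0 i j hii0 hjj0 hij]
        simp [_root_.J]
      have hnu' : (nu:ℝ) = ((k:ℝ)*k - s*k)/V := by
        rw [eq_div_iff hV0]; linarith [hnuid]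
      rw [hdot, if_neg hi, if_neg hj, div_eq_div_iff hV1 (mul_ne_zero hV1 hs0'), hnu']
      field_simp
      ring
  -- assemble
  refine ⟨f, ?_, ?_⟩
  · intro i
    refine ⟨?_, ?_⟩
    · intro a
      have h := hdiag i a a
      rw [if_pos rfl] at h
      have h1 : ⟪f i a, f i a⟫ = 1 := by rw [h]; field_simp
      have h2 : ‖f i a‖^2 = 1 := by rw [← real_inner_self_eq_norm_sq]; exact h1
      nlinarith [norm_nonneg (f i a)]
    · intro a b hab
      have h := hdiag i a b
      rw [if_neg hab] at h
      rw [h]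
      ring
  · intro i j hij a b
    constructor <;> intro hE <;> rw [hcross i j hij a b, hE]
    · rw [mul_one]
    · rw [mul_zero]; ring
end

section
/- Let {B i j} be a non-degenerate LSSD(v,k,λ;w) with natural-number parameters, w ≥ 3, μ > ν, and 1 < k < v−1, and suppose the Krein/Noda bound is tight: (w−1)·(2k−v) = (v−2)·(μ−ν). Then 4·(k−λ) ≤ v and v ≤ 2k. -/
open Matrix

set_option maxHeartbeats 8000000 in
theorem stmt_12 (v w k lam mu nu : ℕ) (hw : 3 ≤ w) (hmn : nu < mu)
    (hk1 : 1 < k) (hkv : k < v - 1)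
    (B : Fin w → Fin w → Matrix (Fin v) (Fin v) ℝ)
    (hB : IsLSSD v w (k : ℝ) (lam : ℝ) (mu : ℝ) (nu : ℝ) B)
    (htight : ((w : ℤ) - 1) * (2 * (k : ℤ) - v) = ((v : ℤ) - 2) * ((mu : ℤ) - nu)) :
    4 * ((k : ℤ) - lam) ≤ (v : ℤ) ∧ (v : ℤ) ≤ 2 * k := by
  have hv4 : 4 ≤ v := by omega
  have hkv2 : k + 2 ≤ v := by omega
  obtain ⟨h01, hT, hD, hL⟩ := hB
  -- indices
  set i0 : Fin w := ⟨0, by omega⟩ with hi0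
  set i1 : Fin w := ⟨1, by omega⟩ with hi1
  set i2 : Fin w := ⟨2, by omega⟩ with hi2
  have hne01 : i0 ≠ i1 := by simp [hi0, hi1, Fin.ext_iff]
  have hne12 : i1 ≠ i2 := by simp [hi1, hi2, Fin.ext_iff]
  have hne02 : i0 ≠ i2 := by simp [hi0, hi2, Fin.ext_iff]
  -- row sums
  have hrow : ∀ i j : Fin w, i ≠ j → ∀ a : Fin v, ∑ b, B i j a b = (k:ℝ) := by
    intro i j hij a
    have h2 := congrFun (congrFun (hD i j hij).1 a) a
    simp only [Matrix.mul_apply, Matrix.transpose_apply, Matrix.add_apply,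
      Matrix.smul_apply, Matrix.one_apply_eq, smul_eq_mul, mul_one, _root_.J,
      Matrix.of_apply] at h2
    have h3 : ∑ c, B i j a c * B i j a c = ∑ c, B i j a c :=
      Finset.sum_congr rfl (fun c _ => by rcases h01 i j hij a c with h | h <;> rw [h] <;> ring)
    rw [h3] at h2
    rw [h2]; ring
  have hcol : ∀ i j : Fin w, i ≠ j → ∀ b : Fin v, ∑ a, B i j a b = (k:ℝ) := by
    intro i j hij b
    have h2 := congrFun (congrFun (hD i j hij).2 b) b
    simp only [Matrix.mul_apply, Matrix.transpose_apply, Matrix.add_apply,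
      Matrix.smul_apply, Matrix.one_apply_eq, smul_eq_mul, mul_one, _root_.J,
      Matrix.of_apply] at h2
    have h3 : ∑ c, B i j c b * B i j c b = ∑ c, B i j c b :=
      Finset.sum_congr rfl (fun c _ => by rcases h01 i j hij c b with h | h <;> rw [h] <;> ring)
    rw [h3] at h2
    rw [h2]; ring
  have hBJ : ∀ i j : Fin w, i ≠ j → B i j * J v = (k:ℝ) • J v := by
    intro i j hij; ext a b
    simp [Matrix.mul_apply, _root_.J, Matrix.smul_apply, hrow i j hij a]
  have hJB : ∀ i j : Fin w, i ≠ j → J v * B i j = (k:ℝ) • J v := by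
    intro i j hij; ext a b
    simp [Matrix.mul_apply, _root_.J, Matrix.smul_apply, hcol i j hij b]
  have hJJ : J v * J v = (v:ℝ) • J v := by
    ext a b; simp [Matrix.mul_apply, _root_.J, Matrix.smul_apply]
  -- distinguished entries
  set a0 : Fin v := ⟨0, by omega⟩ with ha0
  set a1 : Fin v := ⟨1, by omega⟩ with ha1
  have hnea : a0 ≠ a1 := by simp [ha0, ha1, Fin.ext_iff]
  have extract : ∀ al be al' be' : ℝ,
      al • (1 : Matrix (Fin v) (Fin v) ℝ) + be • J v =
        al' • (1 : Matrix (Fin v) (Fin v) ℝ) + be' • J v → al = al' ∧ be = be' := by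
    intro al be al' be' h
    have h1 := congrFun (congrFun h a0) a1
    have h2 := congrFun (congrFun h a0) a0
    simp only [Matrix.add_apply, Matrix.smul_apply, Matrix.one_apply_eq,
      Matrix.one_apply_ne hnea, smul_eq_mul, mul_one, mul_zero, zero_add,
      _root_.J, Matrix.of_apply] at h1 h2
    constructor <;> linarith
  have extractJ : ∀ be be' : ℝ, be • J v = be' • J v → be = be' := by
    intro be be' h
    have h1 := congrFun (congrFun h a0) a1
    simpa [Matrix.smul_apply, _root_.J] using h1
  have hBt01J : (B i0 i1)ᵀ * J v = (k:ℝ) • J v := by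
    rw [← hT i0 i1 hne01]; exact hBJ i1 i0 (Ne.symm hne01)
  have hJBt01 : J v * (B i0 i1)ᵀ = (k:ℝ) • J v := by
    rw [← hT i0 i1 hne01]; exact hJB i1 i0 (Ne.symm hne01)
  have hJBt02 : J v * (B i0 i2)ᵀ = (k:ℝ) • J v := by
    rw [← hT i0 i2 hne02]; exact hJB i2 i0 (Ne.symm hne02)
  -- e1 :  k² = (k - λ) + λ v
  have e1 : (k:ℝ)*k = ((k:ℝ) - lam) + lam * v := by
    have h := congrArg (· * J v) (hD i0 i1 hne01).1
    simp only [mul_assoc, add_mul, Matrix.smul_mul, Matrix.one_mul, hJJ,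
      hBt01J, Matrix.mul_smul, hBJ i0 i1 hne01, smul_smul] at h
    rw [← add_smul] at h
    have h2 := extractJ _ _ h
    linarith
  -- linking equations
  have hl02 : B i0 i1 * B i1 i2 = (nu:ℝ) • J v + ((mu:ℝ) - nu) • B i0 i2 :=
    hL i1 i0 i2 (Ne.symm hne01) hne12 hne02
  have hl20 : B i2 i1 * B i1 i0 = (nu:ℝ) • J v + ((mu:ℝ) - nu) • B i2 i0 :=
    hL i1 i2 i0 hne12 (Ne.symm hne01) (Ne.symm hne02)
  -- e2 : k² = ν v + (μ-ν) k
  have e2 : (k:ℝ)*k = (nu:ℝ) * v + ((mu:ℝ) - nu) * k := by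
    have h : ((k:ℝ)*k) • J v = ((nu:ℝ)*v) • J v + (((mu:ℝ)-nu)*k) • J v := by
      calc ((k:ℝ)*k) • J v = B i0 i1 * (B i1 i2 * J v) := by
            rw [hBJ i1 i2 hne12, Matrix.mul_smul, hBJ i0 i1 hne01, smul_smul]
        _ = (B i0 i1 * B i1 i2) * J v := by rw [mul_assoc]
        _ = ((nu:ℝ) • J v + ((mu:ℝ) - nu) • B i0 i2) * J v := by rw [hl02]
        _ = ((nu:ℝ)*v) • J v + (((mu:ℝ)-nu)*k) • J v := by
            rw [add_mul, Matrix.smul_mul, Matrix.smul_mul, hJJ,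
              hBJ i0 i2 hne02, smul_smul, smul_smul]
    rw [← add_smul] at h
    have h2 := extractJ _ _ h
    linarith
  -- big fourfold product, two ways
  have e12m : B i1 i2 * B i2 i1 = ((k:ℝ) - lam) • 1 + (lam:ℝ) • J v := by
    rw [hT i1 i2 hne12]; exact (hD i1 i2 hne12).1
  have hA : B i0 i1 * B i1 i2 * (B i2 i1 * B i1 i0)
      = (((k:ℝ) - lam) * ((k:ℝ) - lam)) • (1 : Matrix (Fin v) (Fin v) ℝ)
        + (((k:ℝ) - lam) * lam + lam * ((k:ℝ)*k)) • J v := by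
    have hg : B i0 i1 * B i1 i2 * (B i2 i1 * B i1 i0)
        = B i0 i1 * (B i1 i2 * B i2 i1) * B i1 i0 := by
      simp only [mul_assoc]
    rw [hg, e12m, hT i0 i1 hne01]
    rw [mul_add, Matrix.mul_smul, Matrix.mul_smul, mul_one, add_mul,
      Matrix.smul_mul, Matrix.smul_mul, (hD i0 i1 hne01).1, mul_assoc,
      hJBt01, Matrix.mul_smul, hBJ i0 i1 hne01]
    simp only [smul_add, smul_smul]
    module
  have hA' : B i0 i1 * B i1 i2 * (B i2 i1 * B i1 i0)
      = (((mu:ℝ) - nu) * ((mu:ℝ) - nu) * ((k:ℝ) - lam)) • (1 : Matrix (Fin v) (Fin v) ℝ)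
        + ((nu:ℝ) * nu * v + 2 * (nu * ((mu:ℝ) - nu) * k)
            + ((mu:ℝ) - nu) * ((mu:ℝ) - nu) * lam) • J v := by
    rw [hl02, hl20, hT i0 i2 hne02]
    simp only [add_mul, mul_add, Matrix.smul_mul, Matrix.mul_smul, hJJ,
      hJBt02, hBJ i0 i2 hne02, (hD i0 i2 hne02).1, smul_add, smul_smul]
    module
  obtain ⟨hal, hbe⟩ := extract _ _ _ _ (hA.symm.trans hA')
  -- basic real bounds
  have hkR : (2:ℝ) ≤ k := by exact_mod_cast hk1
  have hvR : (k:ℝ) + 2 ≤ v := by exact_mod_cast hkv2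
  have hklne : (k:ℝ) - lam ≠ 0 := by
    intro h
    have hlk : (lam:ℝ) = k := by linarith
    rw [hlk] at e1
    nlinarith
  have hs2R : (k:ℝ) - lam = ((mu:ℝ) - nu) * ((mu:ℝ) - nu) := by
    apply mul_right_cancel₀ hklne
    linear_combination hal
  -- cast to ℤ
  obtain ⟨S, hS⟩ : ∃ S : ℤ, S = (mu:ℤ) - nu := ⟨_, rfl⟩
  have eZ2 : (k:ℤ)^2 = (nu:ℤ) * v + S * k := by
    have : (((k:ℤ)^2 : ℤ) : ℝ) = (((nu:ℤ) * v + S * k : ℤ) : ℝ) := by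
      rw [hS]; push_cast; linear_combination e2
    exact_mod_cast this
  have eZ3 : (k:ℤ) - lam = S^2 := by
    have : (((k:ℤ) - lam : ℤ) : ℝ) = ((S^2 : ℤ) : ℝ) := by
      rw [hS]; push_cast; linear_combination hs2R
    exact_mod_cast this
  have eZ1 : (lam:ℤ) * ((v:ℤ) - 1) = (k:ℤ)^2 - k := by
    have : (((lam:ℤ) * ((v:ℤ) - 1) : ℤ) : ℝ) = (((k:ℤ)^2 - k : ℤ) : ℝ) := by
      push_cast; linear_combination (-1) * e1
    exact_mod_cast this
  rw [← hS] at htight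
  -- integer bounds
  have hS1 : 1 ≤ S := by
    have hmn' : (nu:ℤ) < mu := by exact_mod_cast hmn
    omega
  have hvZ : (4:ℤ) ≤ v := by exact_mod_cast hv4
  have hkZ : (2:ℤ) ≤ k := by exact_mod_cast hk1
  have hkvZ : (k:ℤ) + 2 ≤ v := by exact_mod_cast hkv2
  have hwZ : (3:ℤ) ≤ w := by exact_mod_cast hw
  have hnuZ : (0:ℤ) ≤ nu := by positivity
  -- v ≤ 2k
  have hTpos : 0 < 2*(k:ℤ) - v := by
    have hpos : 0 < ((v:ℤ) - 2) * S := mul_pos (by linarith) (by linarith)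
    rw [← htight] at hpos
    by_contra hcon
    push_neg at hcon
    nlinarith
  refine ⟨?_, by linarith⟩
  -- 4(k-λ) ≤ v
  rw [eZ3]
  by_contra hc
  push_neg at hc
  have hc' : (v:ℤ) + 1 ≤ 4 * S^2 := by linarith
  have hkvk : (k:ℤ) * (v - k) = S^2 * (v - 1) := by
    linear_combination eZ1 + ((v:ℤ) - 1) * eZ3
  have hsq : (2*(k:ℤ) - v)^2 = (v:ℤ)^2 - 4*S^2*((v:ℤ) - 1) := by
    linear_combination (-4) * hkvk
  have hT1 : (2*(k:ℤ) - v)^2 ≤ 1 := by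
    nlinarith [mul_nonneg (by linarith : (0:ℤ) ≤ (v:ℤ) - 1)
      (by linarith : (0:ℤ) ≤ 4*S^2 - ((v:ℤ) + 1))]
  have hTeq : 2*(k:ℤ) - v = 1 := by nlinarith
  rw [hTeq] at hsq
  have hv1 : 4 * S^2 = (v:ℤ) + 1 := by
    have hcan : ((v:ℤ) - 1) ≠ 0 := by linarith
    apply mul_left_cancel₀ hcan
    linear_combination hsq
  have hk2S : (k:ℤ) = 2 * S^2 := by linarith
  have hvS : (v:ℤ) = 4 * S^2 - 1 := by linarith
  rw [hk2S, hvS] at eZ2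
  have hnu : (nu:ℤ) * (2*S + 1) = 2 * S^3 := by
    have h2S1 : (2*S - 1 : ℤ) ≠ 0 := by linarith
    apply mul_left_cancel₀ h2S1
    linear_combination (-1) * eZ2
  have hdvd : (2*S + 1 : ℤ) ∣ 1 :=
    ⟨(4*S^2 - 2*S + 1) - 4*(nu:ℤ), by linear_combination 4 * hnu⟩
  have := Int.le_of_dvd one_pos hdvd
  linarith
end

section
/- (Beth–Wocjan construction) Let n ≥ 1 and N ≥ 2 be natural numbers. Suppose there exists a regular Hadamard matrix of order n, and an orthogonal array O : Fin (n²) → Fin N → Fin n, meaning that for all distinct i, j ∈ Fin N and every pair (x, y) ∈ Fin n × Fin n there is exactly one row r ∈ Fin (n²) with O r i = x and O r j = y. Then there exists a family H' : Fin (N−1) → Matrix (Fin (n²)) (Fin (n²)) ℝ such that each H' i is a regular Hadamard matrix of order n² and, for all i ≠ j, H' i and H' j are unbiased. -/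
open Matrix

/-- A Hadamard matrix of order `n`: a `±1` matrix with `H * Hᵀ = n • 1`. -/
def IsHadamard (n : ℕ) (H : Matrix (Fin n) (Fin n) ℝ) : Prop :=
  (∀ a b, H a b = 1 ∨ H a b = -1) ∧ H * Hᵀ = (n : ℝ) • (1 : Matrix (Fin n) (Fin n) ℝ)

/-- A regular Hadamard matrix: a Hadamard matrix all of whose row sums are equal. -/
def IsRegularHadamard (n : ℕ) (H : Matrix (Fin n) (Fin n) ℝ) : Prop :=
  IsHadamard n H ∧ ∃ c : ℝ, ∀ a, ∑ b, H a b = c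

/-- Two Hadamard matrices are unbiased if `(1/√n) • (H₁ * H₂ᵀ)` is again Hadamard. -/
def UnbiasedHadamard (n : ℕ) (H₁ H₂ : Matrix (Fin n) (Fin n) ℝ) : Prop :=
  IsHadamard n ((1 / Real.sqrt n) • (H₁ * H₂ᵀ))

lemma mul_tr_comm {m : ℕ} {A : Matrix (Fin m) (Fin m) ℝ} {r : ℝ} (hr : r ≠ 0)
    (h : A * Aᵀ = r • 1) : Aᵀ * A = r • 1 := by
  have h1 : A * (r⁻¹ • Aᵀ) = 1 := by
    rw [Matrix.mul_smul, h, smul_smul, inv_mul_cancel₀ hr, one_smul]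
  have h2 : (r⁻¹ • Aᵀ) * A = 1 := mul_eq_one_comm.mp h1
  have h3 : r • ((r⁻¹ • Aᵀ) * A) = r • (1 : Matrix (Fin m) (Fin m) ℝ) := by rw [h2]
  rwa [Matrix.smul_mul, smul_smul, mul_inv_cancel₀ hr, one_smul] at h3

lemma isHadamard_transpose {m : ℕ} {A : Matrix (Fin m) (Fin m) ℝ}
    (h : IsHadamard m A) : IsHadamard m Aᵀ := by
  rcases h with ⟨h1, h2⟩
  refine ⟨fun a b => h1 b a, ?_⟩
  rw [Matrix.transpose_transpose]
  rcases Nat.eq_zero_or_pos m with hm | hm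
  · subst hm; ext a; exact a.elim0
  · exact mul_tr_comm (by positivity) h2

lemma unbiased_symm {m : ℕ} {A B : Matrix (Fin m) (Fin m) ℝ}
    (h : UnbiasedHadamard m A B) : UnbiasedHadamard m B A := by
  have : ((1 / Real.sqrt m) • (A * Bᵀ))ᵀ = (1 / Real.sqrt m) • (B * Aᵀ) := by
    rw [Matrix.transpose_smul, Matrix.transpose_mul, Matrix.transpose_transpose]
  unfold UnbiasedHadamard at *
  rw [← this]
  exact isHadamard_transpose h

lemma unbiased_helper (n : ℕ) (hn : 0 < n) (A B : Matrix (Fin (n^2)) (Fin (n^2)) ℝ)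
    (hA : A * Aᵀ = ((n^2 : ℕ) : ℝ) • 1) (hB : B * Bᵀ = ((n^2 : ℕ) : ℝ) • 1)
    (hAB : ∀ t s, (A * Bᵀ) t s = (n : ℝ) ∨ (A * Bᵀ) t s = -(n : ℝ)) :
    UnbiasedHadamard (n^2) A B := by
  have hn0 : (n : ℝ) ≠ 0 := by positivity
  have hs : Real.sqrt ((n^2 : ℕ) : ℝ) = (n : ℝ) := by
    push_cast
    rw [Real.sqrt_sq (by positivity)]
  constructor
  · intro a b
    rw [Matrix.smul_apply, hs, smul_eq_mul]
    rcases hAB a b with h | h <;> rw [h] <;> [left; right] <;> field_simp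
  · have hBt : Bᵀ * B = ((n^2 : ℕ) : ℝ) • 1 := mul_tr_comm (by positivity) hB
    rw [hs, Matrix.transpose_smul, Matrix.smul_mul, Matrix.mul_smul, smul_smul,
      Matrix.transpose_mul, Matrix.transpose_transpose]
    have : A * Bᵀ * (B * Aᵀ) = A * (Bᵀ * B) * Aᵀ := by
      rw [Matrix.mul_assoc, Matrix.mul_assoc, Matrix.mul_assoc]
    rw [this, hBt, Matrix.mul_smul, Matrix.smul_mul, Matrix.mul_one, hA, smul_smul]
    rw [smul_smul]
    congr 1
    push_cast
    field_simp

noncomputable section BW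

/-- coordinates on `Fin (n^2)` -/
def bwE (n : ℕ) : Fin (n^2) ≃ Fin n × Fin n :=
  (finCongr (pow_two n)).trans finProdFinEquiv.symm

lemma bw_sum (n : ℕ) (f : Fin (n^2) → ℝ) :
    ∑ r, f r = ∑ u : Fin n, ∑ a : Fin n, f ((bwE n).symm (u, a)) := by
  rw [← Equiv.sum_comp (bwE n).symm f, Fintype.sum_prod_type]

/-- tensor square of `H` -/
def bwW (n : ℕ) (H : Matrix (Fin n) (Fin n) ℝ) : Matrix (Fin (n^2)) (Fin (n^2)) ℝ :=
  Matrix.of fun t s => H (bwE n t).1 (bwE n s).1 * H (bwE n t).2 (bwE n s).2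

/-- Bush-type matrix from a Latin square `Λ` and `H` -/
def bwK (n : ℕ) (H : Matrix (Fin n) (Fin n) ℝ) (Λ : Fin n → Fin n → Fin n) :
    Matrix (Fin (n^2)) (Fin (n^2)) ℝ :=
  Matrix.of fun t s => H (Λ (bwE n t).1 (bwE n s).1) (bwE n t).2 *
    H (Λ (bwE n t).1 (bwE n s).1) (bwE n s).2

lemma pm_mul {x y : ℝ} (hx : x = 1 ∨ x = -1) (hy : y = 1 ∨ y = -1) :
    x * y = 1 ∨ x * y = -1 := by rcases hx with h|h <;> rcases hy with h'|h' <;>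
  rw [h, h'] <;> norm_num

lemma bw_eq_iff (n : ℕ) (t s : Fin (n^2)) :
    t = s ↔ (bwE n t).1 = (bwE n s).1 ∧ (bwE n t).2 = (bwE n s).2 := by
  rw [← Prod.ext_iff, Equiv.apply_eq_iff_eq]

lemma bwW_hadamard (n : ℕ) (H : Matrix (Fin n) (Fin n) ℝ)
    (hrow : ∀ a a', ∑ b, H a b * H a' b = if a = a' then (n:ℝ) else 0) :
    bwW n H * (bwW n H)ᵀ = ((n^2 : ℕ) : ℝ) • 1 := by
  ext t s
  rw [Matrix.mul_apply]
  rw [bw_sum n (fun r => bwW n H t r * (bwW n H)ᵀ r s)]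
  simp only [bwW, Matrix.of_apply, Matrix.transpose_apply, Equiv.apply_symm_apply]
  have hterm : ∀ u a : Fin n,
      H (bwE n t).1 u * H (bwE n t).2 a * (H (bwE n s).1 u * H (bwE n s).2 a) =
      (H (bwE n t).1 u * H (bwE n s).1 u) * (H (bwE n t).2 a * H (bwE n s).2 a) := by
    intros; ring
  simp_rw [hterm]
  rw [← Finset.sum_mul_sum, hrow, hrow]
  rw [Matrix.smul_apply, Matrix.one_apply]
  by_cases h1 : (bwE n t).1 = (bwE n s).1 <;> by_cases h2 : (bwE n t).2 = (bwE n s).2 <;>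
    simp [bw_eq_iff n t s, h1, h2] <;> push_cast <;> ring

lemma bwW_pm (n : ℕ) (H : Matrix (Fin n) (Fin n) ℝ)
    (hpm : ∀ a b, H a b = 1 ∨ H a b = -1) :
    ∀ t s, bwW n H t s = 1 ∨ bwW n H t s = -1 := fun t s =>
  pm_mul (hpm _ _) (hpm _ _)

lemma bwK_pm (n : ℕ) (H : Matrix (Fin n) (Fin n) ℝ) (Λ : Fin n → Fin n → Fin n)
    (hpm : ∀ a b, H a b = 1 ∨ H a b = -1) :
    ∀ t s, bwK n H Λ t s = 1 ∨ bwK n H Λ t s = -1 := fun t s =>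
  pm_mul (hpm _ _) (hpm _ _)

lemma bwW_rowsum (n : ℕ) (H : Matrix (Fin n) (Fin n) ℝ) (c : ℝ)
    (hcr : ∀ a, ∑ b, H a b = c) (hc2 : c * c = n) :
    ∀ t, ∑ s, bwW n H t s = (n : ℝ) := by
  intro t
  rw [bw_sum n (fun s => bwW n H t s)]
  simp only [bwW, Matrix.of_apply, Equiv.apply_symm_apply]
  rw [← Finset.sum_mul_sum, hcr, hcr, hc2]

lemma bwK_rowsum (n : ℕ) (H : Matrix (Fin n) (Fin n) ℝ) (Λ : Fin n → Fin n → Fin n)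
    (hΛ : ∀ s, Function.Bijective (Λ s)) (c : ℝ)
    (hcr : ∀ a, ∑ b, H a b = c) (hcc : ∀ b, ∑ a, H a b = c) (hc2 : c * c = n) :
    ∀ t, ∑ s, bwK n H Λ t s = (n : ℝ) := by
  intro t
  rw [bw_sum n (fun s => bwK n H Λ t s)]
  simp only [bwK, Matrix.of_apply, Equiv.apply_symm_apply]
  have : ∀ v : Fin n, ∑ b : Fin n,
      H (Λ (bwE n t).1 v) (bwE n t).2 * H (Λ (bwE n t).1 v) b =
      H (Λ (bwE n t).1 v) (bwE n t).2 * c := by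
    intro v
    rw [← Finset.mul_sum, hcr]
  simp_rw [this]
  rw [← Finset.sum_mul]
  rw [Fintype.sum_bijective (Λ (bwE n t).1) (hΛ _) _
    (fun w => H w (bwE n t).2) (fun k => rfl)]
  rw [hcc, hc2]

lemma bwK_hadamard (n : ℕ) (H : Matrix (Fin n) (Fin n) ℝ) (Λ : Fin n → Fin n → Fin n)
    (hrow : ∀ a a', ∑ b, H a b * H a' b = if a = a' then (n:ℝ) else 0)
    (hcol : ∀ b b', ∑ a, H a b * H a b' = if b = b' then (n:ℝ) else 0)
    (hΛ : ∀ s, Function.Bijective (Λ s))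
    (hΛc : ∀ k s s', Λ s k = Λ s' k → s = s') :
    bwK n H Λ * (bwK n H Λ)ᵀ = ((n^2 : ℕ) : ℝ) • 1 := by
  ext t s
  rw [Matrix.mul_apply]
  rw [bw_sum n (fun r => bwK n H Λ t r * (bwK n H Λ)ᵀ r s)]
  simp only [bwK, Matrix.of_apply, Matrix.transpose_apply, Equiv.apply_symm_apply]
  have hterm : ∀ u a : Fin n,
      H (Λ (bwE n t).1 u) (bwE n t).2 * H (Λ (bwE n t).1 u) a *
        (H (Λ (bwE n s).1 u) (bwE n s).2 * H (Λ (bwE n s).1 u) a) =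
      (H (Λ (bwE n t).1 u) (bwE n t).2 * H (Λ (bwE n s).1 u) (bwE n s).2) *
        (H (Λ (bwE n t).1 u) a * H (Λ (bwE n s).1 u) a) := by intros; ring
  simp_rw [hterm, ← Finset.mul_sum, hrow]
  rw [Matrix.smul_apply, Matrix.one_apply]
  by_cases h1 : (bwE n t).1 = (bwE n s).1
  · rw [h1]
    simp only [eq_self_iff_true, if_true]
    rw [Fintype.sum_bijective (Λ (bwE n s).1) (hΛ _) _
      (fun w => H w (bwE n t).2 * H w (bwE n s).2 * (n:ℝ)) (fun k => rfl)]
    rw [← Finset.sum_mul, hcol]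
    by_cases h2 : (bwE n t).2 = (bwE n s).2 <;>
      simp [bw_eq_iff n t s, h1, h2] <;> push_cast <;> ring
  · have hz : ∀ u : Fin n,
        (if Λ (bwE n t).1 u = Λ (bwE n s).1 u then (n:ℝ) else 0) = 0 := by
      intro u
      exact if_neg (fun h => h1 (hΛc u _ _ h))
    simp_rw [hz, mul_zero, Finset.sum_const_zero]
    have : t ≠ s := fun h => h1 (((bw_eq_iff n t s).mp h).1)
    simp [this]

lemma bwKK_entries (n : ℕ) (H : Matrix (Fin n) (Fin n) ℝ)
    (Λ Λ' : Fin n → Fin n → Fin n)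
    (hpm : ∀ a b, H a b = 1 ∨ H a b = -1)
    (hrow : ∀ a a', ∑ b, H a b * H a' b = if a = a' then (n:ℝ) else 0)
    (hsu : ∀ s s', ∃! k, Λ s k = Λ' s' k) :
    ∀ t s, (bwK n H Λ * (bwK n H Λ')ᵀ) t s = (n : ℝ) ∨
      (bwK n H Λ * (bwK n H Λ')ᵀ) t s = -(n : ℝ) := by
  intro t s
  rw [Matrix.mul_apply]
  rw [bw_sum n (fun r => bwK n H Λ t r * (bwK n H Λ')ᵀ r s)]
  simp only [bwK, Matrix.of_apply, Matrix.transpose_apply, Equiv.apply_symm_apply]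
  have hterm : ∀ u a : Fin n,
      H (Λ (bwE n t).1 u) (bwE n t).2 * H (Λ (bwE n t).1 u) a *
        (H (Λ' (bwE n s).1 u) (bwE n s).2 * H (Λ' (bwE n s).1 u) a) =
      (H (Λ (bwE n t).1 u) (bwE n t).2 * H (Λ' (bwE n s).1 u) (bwE n s).2) *
        (H (Λ (bwE n t).1 u) a * H (Λ' (bwE n s).1 u) a) := by intros; ring
  simp_rw [hterm, ← Finset.mul_sum, hrow]
  obtain ⟨k0, hk0, huniq⟩ := hsu (bwE n t).1 (bwE n s).1
  have hred : ∀ u : Fin n,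
      (H (Λ (bwE n t).1 u) (bwE n t).2 * H (Λ' (bwE n s).1 u) (bwE n s).2) *
        (if Λ (bwE n t).1 u = Λ' (bwE n s).1 u then (n:ℝ) else 0) =
      if u = k0 then
        (H (Λ (bwE n t).1 k0) (bwE n t).2 * H (Λ' (bwE n s).1 k0) (bwE n s).2) * (n:ℝ)
      else 0 := by
    intro u
    by_cases h : u = k0
    · subst h; rw [if_pos hk0, if_pos rfl]
    · rw [if_neg (fun hc => h (huniq u hc)), if_neg h, mul_zero]
  rw [Finset.sum_congr rfl (fun u _ => hred u), Finset.sum_ite_eq' Finset.univ k0]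
  simp only [Finset.mem_univ, if_true]
  rcases hpm (Λ (bwE n t).1 k0) (bwE n t).2 with h1 | h1 <;>
    rcases hpm (Λ' (bwE n s).1 k0) (bwE n s).2 with h2 | h2 <;>
    rw [h1, h2] <;> [left; right; right; left] <;> ring

lemma bwKW_entries (n : ℕ) (H : Matrix (Fin n) (Fin n) ℝ)
    (Λ : Fin n → Fin n → Fin n)
    (hpm : ∀ a b, H a b = 1 ∨ H a b = -1)
    (hrow : ∀ a a', ∑ b, H a b * H a' b = if a = a' then (n:ℝ) else 0)
    (hΛ : ∀ s, Function.Bijective (Λ s)) :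
    ∀ t s, (bwK n H Λ * (bwW n H)ᵀ) t s = (n : ℝ) ∨
      (bwK n H Λ * (bwW n H)ᵀ) t s = -(n : ℝ) := by
  intro t s
  rw [Matrix.mul_apply]
  rw [bw_sum n (fun r => bwK n H Λ t r * (bwW n H)ᵀ r s)]
  simp only [bwK, bwW, Matrix.of_apply, Matrix.transpose_apply, Equiv.apply_symm_apply]
  have hterm : ∀ u a : Fin n,
      H (Λ (bwE n t).1 u) (bwE n t).2 * H (Λ (bwE n t).1 u) a *
        (H (bwE n s).1 u * H (bwE n s).2 a) =
      (H (Λ (bwE n t).1 u) (bwE n t).2 * H (bwE n s).1 u) *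
        (H (Λ (bwE n t).1 u) a * H (bwE n s).2 a) := by intros; ring
  simp_rw [hterm, ← Finset.mul_sum, hrow]
  obtain ⟨k0, hk0, huniq⟩ := (hΛ (bwE n t).1).existsUnique (bwE n s).2
  have hred : ∀ u : Fin n,
      (H (Λ (bwE n t).1 u) (bwE n t).2 * H (bwE n s).1 u) *
        (if Λ (bwE n t).1 u = (bwE n s).2 then (n:ℝ) else 0) =
      if u = k0 then
        (H (Λ (bwE n t).1 k0) (bwE n t).2 * H (bwE n s).1 k0) * (n:ℝ)
      else 0 := by
    intro u
    by_cases h : u = k0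
    · subst h; rw [if_pos hk0, if_pos rfl]
    · rw [if_neg (fun hc => h (huniq u hc)), if_neg h, mul_zero]
  rw [Finset.sum_congr rfl (fun u _ => hred u), Finset.sum_ite_eq' Finset.univ k0]
  simp only [Finset.mem_univ, if_true]
  rcases hpm (Λ (bwE n t).1 k0) (bwE n t).2 with h1 | h1 <;>
    rcases hpm (bwE n s).1 k0 with h2 | h2 <;>
    rw [h1, h2] <;> [left; right; right; left] <;> ring

lemma bw_key (n : ℕ) (hn : 1 ≤ n)
    (H : Matrix (Fin n) (Fin n) ℝ)
    (hpm : ∀ a b, H a b = 1 ∨ H a b = -1)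
    (hrow : ∀ a a', ∑ b, H a b * H a' b = if a = a' then (n:ℝ) else 0)
    (hcol : ∀ b b', ∑ a, H a b * H a b' = if b = b' then (n:ℝ) else 0)
    (c : ℝ) (hcr : ∀ a, ∑ b, H a b = c) (hcc : ∀ b, ∑ a, H a b = c)
    (hc2 : c * c = n)
    (m : ℕ) (L : Fin m → Fin n → Fin n → Fin n)
    (hLrow : ∀ d s, Function.Bijective (L d s))
    (hLcol : ∀ d k s s', L d s k = L d s' k → s = s')
    (hsuit : ∀ d d', d ≠ d' → ∀ s s', ∃! k, L d s k = L d' s' k) :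
    ∃ H' : Fin (m+1) → Matrix (Fin (n^2)) (Fin (n^2)) ℝ,
      (∀ i, IsRegularHadamard (n^2) (H' i)) ∧
      ∀ i j, i ≠ j → UnbiasedHadamard (n^2) (H' i) (H' j) := by
  have hn' : 0 < n := hn
  refine ⟨fun i => Fin.cases (bwW n H) (fun d => bwK n H (L d)) i, ?_, ?_⟩
  · intro i
    induction i using Fin.cases with
    | zero =>
      exact ⟨⟨bwW_pm n H hpm, bwW_hadamard n H hrow⟩, (n : ℝ),
        bwW_rowsum n H c hcr hc2⟩
    | succ d =>
      exact ⟨⟨bwK_pm n H (L d) hpm, bwK_hadamard n H (L d) hrow hcol (hLrow d) (hLcol d)⟩,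
        (n : ℝ), bwK_rowsum n H (L d) (hLrow d) c hcr hcc hc2⟩
  · intro i j hij
    rcases Fin.eq_zero_or_eq_succ i with rfl | ⟨d, rfl⟩ <;>
      rcases Fin.eq_zero_or_eq_succ j with rfl | ⟨d', rfl⟩
    · exact absurd rfl hij
    · simp only [Fin.cases_zero, Fin.cases_succ]
      exact unbiased_symm (unbiased_helper n hn' _ _
        (bwK_hadamard n H (L d') hrow hcol (hLrow d') (hLcol d'))
        (bwW_hadamard n H hrow)
        (bwKW_entries n H (L d') hpm hrow (hLrow d')))
    · simp only [Fin.cases_zero, Fin.cases_succ]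
      exact unbiased_helper n hn' _ _
        (bwK_hadamard n H (L d) hrow hcol (hLrow d) (hLcol d))
        (bwW_hadamard n H hrow)
        (bwKW_entries n H (L d) hpm hrow (hLrow d))
    · simp only [Fin.cases_succ]
      have hdd : d ≠ d' := fun h => hij (by rw [h])
      exact unbiased_helper n hn' _ _
        (bwK_hadamard n H (L d) hrow hcol (hLrow d) (hLcol d))
        (bwK_hadamard n H (L d') hrow hcol (hLrow d') (hLcol d'))
        (bwKK_entries n H (L d) (L d') hpm hrow (hsuit d d' hdd))

lemma oa_suitable (n N : ℕ) (hN : 2 ≤ N)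
    (O : Fin (n^2) → Fin N → Fin n)
    (hO : ∀ i j : Fin N, i ≠ j → ∀ x y : Fin n,
      ∃! r : Fin (n^2), O r i = x ∧ O r j = y) :
    ∃ L : Fin (N-2) → Fin n → Fin n → Fin n,
      (∀ d s, Function.Bijective (L d s)) ∧
      (∀ d k s s', L d s k = L d s' k → s = s') ∧
      (∀ d d', d ≠ d' → ∀ s s', ∃! k, L d s k = L d' s' k) := by
  have key : ∀ i j : Fin N, i ≠ j → ∀ r r' : Fin (n^2),
      O r i = O r' i → O r j = O r' j → r = r' := by
    intro i j hij r r' h1 h2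
    obtain ⟨u, _, hu⟩ := hO i j hij (O r i) (O r j)
    rw [hu r ⟨rfl, rfl⟩, hu r' ⟨h1.symm, h2.symm⟩]
  obtain ⟨c0, hc0⟩ : ∃ c : Fin N, c.1 = 0 := ⟨⟨0, by omega⟩, rfl⟩
  obtain ⟨c1, hc1⟩ : ∃ c : Fin N, c.1 = 1 := ⟨⟨1, by omega⟩, rfl⟩
  have hcolex : ∀ d : Fin (N-2), ∃ cd : Fin N, cd.1 = d.1 + 2 :=
    fun d => ⟨⟨d.1 + 2, by have := d.isLt; omega⟩, rfl⟩
  choose col hcolv using hcolex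
  have ne01 : c0 ≠ c1 := by
    intro h; have := congrArg Fin.val h; rw [hc0, hc1] at this; omega
  have hne0 : ∀ d, col d ≠ c0 := by
    intro d h; have := congrArg Fin.val h; rw [hcolv, hc0] at this; omega
  have hne1 : ∀ d, col d ≠ c1 := by
    intro d h; have := congrArg Fin.val h; rw [hcolv, hc1] at this; omega
  have hnecol : ∀ d d' : Fin (N-2), d ≠ d' → col d ≠ col d' := by
    intro d d' hdd h
    have := congrArg Fin.val h; rw [hcolv, hcolv] at this
    exact hdd (Fin.ext (by omega))
  have hO' : ∀ (d : Fin (N-2)) (s k : Fin n),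
      ∃! r : Fin (n^2), O r (col d) = s ∧ O r c1 = k :=
    fun d s k => hO (col d) c1 (hne1 d) s k
  choose R hR using hO'
  refine ⟨fun d s k => O (R d s k) c0, ?_, ?_, ?_⟩
  · intro d s
    refine Finite.injective_iff_bijective.mp ?_
    intro k k' h
    have hrr : R d s k = R d s k' :=
      key (col d) c0 (hne0 d) _ _
        (by rw [(hR d s k).1.1, (hR d s k').1.1]) h
    rw [← (hR d s k).1.2, hrr, (hR d s k').1.2]
  · intro d k s s' h
    have hrr : R d s k = R d s' k :=
      key c0 c1 ne01 _ _ h (by rw [(hR d s k).1.2, (hR d s' k).1.2])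
    rw [← (hR d s k).1.1, hrr, (hR d s' k).1.1]
  · intro d d' hdd s s'
    obtain ⟨r0, ⟨hr0d, hr0d'⟩, hr0u⟩ := hO (col d) (col d') (hnecol d d' hdd) s s'
    refine ⟨O r0 c1, ?_, ?_⟩
    · have e1 : R d s (O r0 c1) = r0 :=
        key (col d) c1 (hne1 d) _ _
          (by rw [(hR d s _).1.1, hr0d]) ((hR d s _).1.2)
      have e2 : R d' s' (O r0 c1) = r0 :=
        key (col d') c1 (hne1 d') _ _
          (by rw [(hR d' s' _).1.1, hr0d']) ((hR d' s' _).1.2)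
      show O (R d s _) c0 = O (R d' s' _) c0
      rw [e1, e2]
    · intro k hk
      have hreq : R d s k = R d' s' k :=
        key c0 c1 ne01 _ _ hk (by rw [(hR d s k).1.2, (hR d' s' k).1.2])
      have : R d s k = r0 :=
        hr0u _ ⟨(hR d s k).1.1, by rw [hreq]; exact (hR d' s' k).1.1⟩
      rw [← (hR d s k).1.2, this]

end BW

/-- The Beth–Wocjan construction: a regular Hadamard matrix of order `n` and an
orthogonal array with `N` columns on `n` symbols yield `N - 1` pairwise unbiased
regular Hadamard matrices of order `n²`. -/
theorem stmt_19 (n N : ℕ) (hn : 1 ≤ n) (hN : 2 ≤ N)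
    (H : Matrix (Fin n) (Fin n) ℝ) (hH : IsRegularHadamard n H)
    (O : Fin (n ^ 2) → Fin N → Fin n)
    (hO : ∀ i j : Fin N, i ≠ j → ∀ x y : Fin n,
      ∃! r : Fin (n ^ 2), O r i = x ∧ O r j = y) :
    ∃ H' : Fin (N - 1) → Matrix (Fin (n ^ 2)) (Fin (n ^ 2)) ℝ,
      (∀ i, IsRegularHadamard (n ^ 2) (H' i)) ∧
      ∀ i j, i ≠ j → UnbiasedHadamard (n ^ 2) (H' i) (H' j) := by
  obtain ⟨⟨hpm, hprod⟩, c, hcr⟩ := hH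
  have hn0 : (n : ℝ) ≠ 0 := by positivity
  have hrow : ∀ a a', ∑ b, H a b * H a' b = if a = a' then (n:ℝ) else 0 := by
    intro a a'
    have := congrFun (congrFun hprod a) a'
    simpa [Matrix.mul_apply, Matrix.one_apply, mul_ite, mul_one, mul_zero] using this
  have htr : Hᵀ * H = (n : ℝ) • 1 := mul_tr_comm hn0 hprod
  have hcol : ∀ b b', ∑ a, H a b * H a b' = if b = b' then (n:ℝ) else 0 := by
    intro b b'
    have := congrFun (congrFun htr b) b'
    simpa [Matrix.mul_apply, Matrix.one_apply, mul_ite, mul_one, mul_zero] using this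
  have hc2 : c * c = n := by
    have h1 : (n : ℝ) * (c * c) = (n : ℝ) * n := by
      calc (n:ℝ) * (c * c) = ∑ _a : Fin n, c * c := by
            rw [Finset.sum_const, Finset.card_univ, Fintype.card_fin, nsmul_eq_mul]
        _ = ∑ a, (∑ b, H a b) * (∑ b', H a b') :=
            Finset.sum_congr rfl (fun a _ => by rw [hcr])
        _ = ∑ a, ∑ b, ∑ b', H a b * H a b' := by simp_rw [Finset.sum_mul_sum]
        _ = ∑ b, ∑ a, ∑ b', H a b * H a b' := Finset.sum_comm
        _ = ∑ b, ∑ b', ∑ a, H a b * H a b' :=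
            Finset.sum_congr rfl (fun b _ => Finset.sum_comm)
        _ = ∑ b : Fin n, ∑ b' : Fin n, if b = b' then (n:ℝ) else 0 := by simp_rw [hcol]
        _ = ∑ _b : Fin n, (n:ℝ) := by simp
        _ = (n:ℝ) * n := by
            rw [Finset.sum_const, Finset.card_univ, Fintype.card_fin, nsmul_eq_mul]
    exact mul_left_cancel₀ hn0 h1
  have hcne : c ≠ 0 := by
    intro h
    rw [h, mul_zero] at hc2
    exact hn0 hc2.symm
  have hcc : ∀ b, ∑ a, H a b = c := by
    intro b
    have h2 : (∑ a, H a b) * c = c * c := by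
      calc (∑ a, H a b) * c = ∑ a, H a b * c := by rw [Finset.sum_mul]
        _ = ∑ a, H a b * ∑ b', H a b' :=
            Finset.sum_congr rfl (fun a _ => by rw [hcr])
        _ = ∑ a, ∑ b', H a b * H a b' := by simp_rw [Finset.mul_sum]
        _ = ∑ b', ∑ a, H a b * H a b' := Finset.sum_comm
        _ = ∑ b' : Fin n, if b = b' then (n:ℝ) else 0 := by simp_rw [hcol]
        _ = (n:ℝ) := by simp
        _ = c * c := hc2.symm
    exact mul_right_cancel₀ hcne h2
  obtain ⟨L, hL1, hL2, hL3⟩ := oa_suitable n N hN O hO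
  obtain ⟨H'', hreg, hunb⟩ :=
    bw_key n hn H hpm hrow hcol c hcr hcc hc2 (N-2) L hL1 hL2 hL3
  have hm : N - 2 + 1 = N - 1 := by omega
  exact ⟨fun i => H'' (finCongr hm.symm i), fun i => hreg _,
    fun i j hij => hunb _ _ (fun h => hij ((finCongr hm.symm).injective h))⟩
end
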